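/- arXiv:1310.0657 — 5 statements merged into one kernel-verified Lean document; each statement's English description precedes it below -/
import Mathlib

section
/- Let X₁ and X₂ be independent random variables (with values in arbitrary measurable spaces), and let Y₂ be a random variable independent of the pair (X₁, X₂) and with the same distribution as X₂. Let g be a measurable real-valued function such that g(X₁,X₂) is square-integrable. Then E(g(X₁,X₂)·g(X₁,Y₂)) = E( (E(g(X₁,X₂)|X₁))² ) and Cov(g(X₁,X₂), g(X₁,Y₂)) = Var( E(g(X₁,X₂)|X₁) ). -/
open MeasureTheory ProbabilityTheory

private lemma memLp2_mul_integrable {Ω : Type*} [MeasurableSpace Ω] {μ : Measure Ω}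
    {f g : Ω → ℝ} (hf : MemLp f 2 μ) (hg : MemLp g 2 μ) :
    Integrable (fun ω => f ω * g ω) μ := by
  have h := hf.integrable_sq.add hg.integrable_sq
  refine h.mono' (hf.aestronglyMeasurable.mul hg.aestronglyMeasurable) ?_
  filter_upwards with ω
  simp only [Pi.add_apply, Real.norm_eq_abs, abs_mul]
  nlinarith [sq_nonneg (|f ω| - |g ω|), sq_abs (f ω), sq_abs (g ω), abs_nonneg (f ω),
    abs_nonneg (g ω)]

private lemma expand_cov {Ω : Type*} [MeasurableSpace Ω] {μ : Measure Ω} [IsProbabilityMeasure μ]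
    {V W : Ω → ℝ} (c : ℝ) (hV : Integrable V μ) (hW : Integrable W μ)
    (hVW : Integrable (fun ω => V ω * W ω) μ) :
    ∫ ω, (V ω - c) * (W ω - c) ∂μ =
      ∫ ω, V ω * W ω ∂μ - c * ∫ ω, W ω ∂μ - c * ∫ ω, V ω ∂μ + c ^ 2 := by
  have i2 : Integrable (fun ω => c * W ω) μ := hW.const_mul c
  have i3 : Integrable (fun ω => c * V ω) μ := hV.const_mul c
  have i4 : Integrable (fun _ : Ω => c ^ 2) μ := integrable_const _
  have i1 : Integrable (fun ω => V ω * W ω - c * W ω) μ := hVW.sub i2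
  have i5 : Integrable (fun ω => c * V ω - c ^ 2) μ := i3.sub i4
  have hrw : (fun ω => (V ω - c) * (W ω - c)) =
      fun ω => (V ω * W ω - c * W ω) - (c * V ω - c ^ 2) := by
    funext ω; ring
  rw [hrw, integral_sub i1 i5, integral_sub hVW i2, integral_sub i3 i4,
    integral_const_mul, integral_const_mul, integral_const, probReal_univ,
    one_smul]
  ring

/-- Theorem: if `X₁ ⟂ X₂`, `Y₂ ⟂ (X₁, X₂)`, `Y₂ ~ X₂` and `g(X₁,X₂)` is
square-integrable, then `E(g(X₁,X₂)·g(X₁,Y₂)) = E((E(g(X₁,X₂)|X₁))²)` and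
`Cov(g(X₁,X₂), g(X₁,Y₂)) = Var(E(g(X₁,X₂)|X₁))`, with
`Cov(V,W) = E((V − E V)(W − E W))` and `Var(V) = Cov(V,V)`. -/
theorem stmt1 {Ω α β : Type*} [MeasurableSpace Ω] [MeasurableSpace α] [MeasurableSpace β]
    (μ : Measure Ω) [IsProbabilityMeasure μ]
    (X₁ : Ω → α) (X₂ Y₂ : Ω → β)
    (hX₁ : Measurable X₁) (hX₂ : Measurable X₂) (hY₂ : Measurable Y₂)
    (hindep : IndepFun X₁ X₂ μ)
    (hYindep : IndepFun (fun ω => (X₁ ω, X₂ ω)) Y₂ μ)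
    (hYdist : IdentDistrib Y₂ X₂ μ μ)
    (g : α × β → ℝ) (hg : Measurable g)
    (hg2 : MemLp (fun ω => g (X₁ ω, X₂ ω)) 2 μ) :
    (∫ ω, g (X₁ ω, X₂ ω) * g (X₁ ω, Y₂ ω) ∂μ =
      ∫ ω, ((MeasureTheory.condExp (MeasurableSpace.comap X₁ inferInstance) μ
        (fun ω' => g (X₁ ω', X₂ ω'))) ω) ^ 2 ∂μ) ∧
    (∫ ω, (g (X₁ ω, X₂ ω) - ∫ ω', g (X₁ ω', X₂ ω') ∂μ) *
        (g (X₁ ω, Y₂ ω) - ∫ ω', g (X₁ ω', Y₂ ω') ∂μ) ∂μ =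
      ∫ ω, ((MeasureTheory.condExp (MeasurableSpace.comap X₁ inferInstance) μ
            (fun ω' => g (X₁ ω', X₂ ω'))) ω -
          ∫ ω', (MeasureTheory.condExp (MeasurableSpace.comap X₁ inferInstance) μ
            (fun ω'' => g (X₁ ω'', X₂ ω''))) ω' ∂μ) ^ 2 ∂μ) := by
  have hm : MeasurableSpace.comap X₁ inferInstance ≤ ‹MeasurableSpace Ω› := hX₁.comap_le
  set ν₁ := μ.map X₁ with hν₁def
  set ν₂ := μ.map X₂ with hν₂def
  haveI iP₁ : IsProbabilityMeasure ν₁ := Measure.isProbabilityMeasure_map hX₁.aemeasurable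
  haveI iP₂ : IsProbabilityMeasure ν₂ := Measure.isProbabilityMeasure_map hX₂.aemeasurable
  have hY2map : μ.map Y₂ = ν₂ := hYdist.map_eq
  have hXX : Measurable (fun ω => (X₁ ω, X₂ ω)) := hX₁.prodMk hX₂
  have hA : Measurable (fun ω => (X₁ ω, (X₂ ω, Y₂ ω))) := hX₁.prodMk (hX₂.prodMk hY₂)
  have hXXmap : μ.map (fun ω => (X₁ ω, X₂ ω)) = ν₁.prod ν₂ :=
    (indepFun_iff_map_prod_eq_prod_map_map hX₁.aemeasurable hX₂.aemeasurable).mp hindep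
  have hXYmap : μ.map (fun ω => (X₁ ω, Y₂ ω)) = ν₁.prod ν₂ := by
    have hX₁Y : IndepFun X₁ Y₂ μ := hYindep.comp measurable_fst measurable_id
    rw [(indepFun_iff_map_prod_eq_prod_map_map hX₁.aemeasurable hY₂.aemeasurable).mp hX₁Y,
      hY2map]
  have hAmap : μ.map (fun ω => (X₁ ω, (X₂ ω, Y₂ ω))) = ν₁.prod (ν₂.prod ν₂) := by
    have h1 : μ.map (fun ω => ((X₁ ω, X₂ ω), Y₂ ω)) = (ν₁.prod ν₂).prod ν₂ := by
      rw [(indepFun_iff_map_prod_eq_prod_map_map hXX.aemeasurable hY₂.aemeasurable).mp hYindep,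
        hXXmap, hY2map]
    have h2 := (measurePreserving_prodAssoc ν₁ ν₂ ν₂).map_eq
    have hcomp : (⇑(MeasurableEquiv.prodAssoc (α := α) (β := β) (γ := β)) ∘
        fun ω => ((X₁ ω, X₂ ω), Y₂ ω)) = fun ω => (X₁ ω, (X₂ ω, Y₂ ω)) := rfl
    calc μ.map (fun ω => (X₁ ω, (X₂ ω, Y₂ ω)))
        = (μ.map (fun ω => ((X₁ ω, X₂ ω), Y₂ ω))).map MeasurableEquiv.prodAssoc := by
          rw [Measure.map_map MeasurableEquiv.prodAssoc.measurable (hXX.prodMk hY₂), hcomp]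
      _ = ν₁.prod (ν₂.prod ν₂) := by rw [h1, h2]
  -- g on the product space
  have hgL2 : MemLp g 2 (ν₁.prod ν₂) := by
    rw [← hXXmap]
    exact (memLp_map_measure_iff hg.aestronglyMeasurable hXX.aemeasurable).mpr hg2
  have hgint : Integrable g (ν₁.prod ν₂) := hgL2.integrable one_le_two
  have hVint : Integrable (fun ω => g (X₁ ω, X₂ ω)) μ := hg2.integrable one_le_two
  have hWint : Integrable (fun ω => g (X₁ ω, Y₂ ω)) μ :=
    (integrable_map_measure hg.aestronglyMeasurable (hX₁.prodMk hY₂).aemeasurable).mp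
      (by rw [hXYmap]; exact hgint)
  -- the function h
  set h : α → ℝ := fun x => ∫ y, g (x, y) ∂ν₂ with hhdef
  have hh_sm : StronglyMeasurable h := hg.stronglyMeasurable.integral_prod_right'
  have hhint : Integrable h ν₁ := hgint.integral_prod_left
  have hhX₁int : Integrable (fun ω => h (X₁ ω)) μ :=
    (integrable_map_measure hh_sm.aestronglyMeasurable hX₁.aemeasurable).mp hhint
  -- conditional expectation identification
  have hcond : (fun ω => h (X₁ ω)) =ᵐ[μ]
      μ[(fun ω => g (X₁ ω, X₂ ω))|MeasurableSpace.comap X₁ inferInstance] := by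
    refine ae_eq_condExp_of_forall_setIntegral_eq hm hVint
      (fun s _ _ => hhX₁int.integrableOn) ?_ ?_
    · rintro s ⟨t, ht, rfl⟩ -
      have hres : Integrable g ((ν₁.restrict t).prod ν₂) := by
        rw [← Measure.restrict_univ (μ := ν₂), Measure.prod_restrict]
        exact hgint.integrableOn
      calc ∫ ω in X₁ ⁻¹' t, h (X₁ ω) ∂μ
          = ∫ x in t, h x ∂ν₁ :=
            (setIntegral_map ht hh_sm.aestronglyMeasurable hX₁.aemeasurable).symm
        _ = ∫ p, g p ∂((ν₁.restrict t).prod ν₂) := by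
            rw [integral_prod _ hres]
        _ = ∫ p in t ×ˢ Set.univ, g p ∂(ν₁.prod ν₂) := by
            rw [← Measure.prod_restrict, Measure.restrict_univ]
        _ = ∫ ω in X₁ ⁻¹' t, g (X₁ ω, X₂ ω) ∂μ := by
            have hpre : (fun ω => (X₁ ω, X₂ ω)) ⁻¹' (t ×ˢ (Set.univ : Set β)) = X₁ ⁻¹' t := by
              ext ω; simp
            rw [← hXXmap, setIntegral_map (ht.prod MeasurableSet.univ) hg.aestronglyMeasurable
              hXX.aemeasurable, hpre]
    · exact (hh_sm.comp_measurable (Measurable.of_comap_le le_rfl)).aestronglyMeasurable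
  -- the big product function
  set G : α × β × β → ℝ := fun p => g (p.1, p.2.1) * g (p.1, p.2.2) with hGdef
  have hπ1 : Measurable (fun p : α × β × β => (p.1, p.2.1)) :=
    measurable_fst.prodMk (measurable_fst.comp measurable_snd)
  have hπ2 : Measurable (fun p : α × β × β => (p.1, p.2.2)) :=
    measurable_fst.prodMk (measurable_snd.comp measurable_snd)
  have hGmeas : Measurable G := (hg.comp hπ1).mul (hg.comp hπ2)
  have hmap1 : (ν₁.prod (ν₂.prod ν₂)).map (fun p : α × β × β => (p.1, p.2.1)) = ν₁.prod ν₂ := by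
    have hpm : (fun p : α × β × β => (p.1, p.2.1)) = Prod.map id Prod.fst := rfl
    rw [hpm, ← Measure.map_prod_map _ _ measurable_id measurable_fst, Measure.map_id,
      Measure.map_fst_prod, measure_univ, one_smul]
  have hmap2 : (ν₁.prod (ν₂.prod ν₂)).map (fun p : α × β × β => (p.1, p.2.2)) = ν₁.prod ν₂ := by
    have hpm : (fun p : α × β × β => (p.1, p.2.2)) = Prod.map id Prod.snd := rfl
    rw [hpm, ← Measure.map_prod_map _ _ measurable_id measurable_snd, Measure.map_id,
      Measure.map_snd_prod, measure_univ, one_smul]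
  have hf1 : MemLp (fun p : α × β × β => g (p.1, p.2.1)) 2 (ν₁.prod (ν₂.prod ν₂)) :=
    (memLp_map_measure_iff hg.aestronglyMeasurable hπ1.aemeasurable).mp
      (by rw [hmap1]; exact hgL2)
  have hf2 : MemLp (fun p : α × β × β => g (p.1, p.2.2)) 2 (ν₁.prod (ν₂.prod ν₂)) :=
    (memLp_map_measure_iff hg.aestronglyMeasurable hπ2.aemeasurable).mp
      (by rw [hmap2]; exact hgL2)
  have hGint : Integrable G (ν₁.prod (ν₂.prod ν₂)) := memLp2_mul_integrable hf1 hf2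
  have hGpt : ∀ x, ∫ q, G (x, q) ∂(ν₂.prod ν₂) = h x ^ 2 := by
    intro x
    have hmul := integral_prod_mul (μ := ν₂) (ν := ν₂) (fun y => g (x, y)) (fun y => g (x, y))
    simp only [hGdef, hhdef]
    simpa [pow_two] using hmul
  -- part 1 formula
  have part1 : ∫ ω, g (X₁ ω, X₂ ω) * g (X₁ ω, Y₂ ω) ∂μ = ∫ x, h x ^ 2 ∂ν₁ := by
    have e1 : ∫ ω, g (X₁ ω, X₂ ω) * g (X₁ ω, Y₂ ω) ∂μ = ∫ p, G p ∂(ν₁.prod (ν₂.prod ν₂)) := by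
      rw [← hAmap, integral_map hA.aemeasurable hGmeas.aestronglyMeasurable]
    rw [e1, integral_prod _ hGint]
    simp only [hGpt]
  have hh2int : Integrable (fun x => h x ^ 2) ν₁ :=
    hGint.integral_prod_left.congr (Filter.Eventually.of_forall hGpt)
  have hh2_sm : StronglyMeasurable (fun x => h x ^ 2) := hh_sm.pow 2
  have hhX2int : Integrable (fun ω => h (X₁ ω) ^ 2) μ :=
    (integrable_map_measure hh2_sm.aestronglyMeasurable hX₁.aemeasurable).mp hh2int
  have hcondsq : (fun ω => h (X₁ ω) ^ 2) =ᵐ[μ]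
      fun ω => (μ[(fun ω' => g (X₁ ω', X₂ ω'))|MeasurableSpace.comap X₁ inferInstance]) ω ^ 2 :=
    hcond.mono fun ω hω => by simpa using congrArg (· ^ 2) hω
  have goal1 : ∫ ω, g (X₁ ω, X₂ ω) * g (X₁ ω, Y₂ ω) ∂μ =
      ∫ ω, (μ[(fun ω' => g (X₁ ω', X₂ ω'))|MeasurableSpace.comap X₁ inferInstance]) ω ^ 2 ∂μ := by
    rw [part1, ← integral_congr_ae hcondsq,
      integral_map hX₁.aemeasurable hh2_sm.aestronglyMeasurable]
  refine ⟨goal1, ?_⟩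
  -- part 2
  set c := ∫ ω, g (X₁ ω, X₂ ω) ∂μ with hcdef
  have hVeq : ∫ ω, g (X₁ ω, X₂ ω) ∂μ = c := hcdef.symm
  have hWeq : ∫ ω, g (X₁ ω, Y₂ ω) ∂μ = c := by
    have l1 : ∫ ω, g (X₁ ω, Y₂ ω) ∂μ = ∫ p, g p ∂(ν₁.prod ν₂) := by
      rw [← hXYmap, integral_map (hX₁.prodMk hY₂).aemeasurable hg.aestronglyMeasurable]
    have l2 : ∫ ω, g (X₁ ω, X₂ ω) ∂μ = ∫ p, g p ∂(ν₁.prod ν₂) := by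
      rw [← hXXmap, integral_map hXX.aemeasurable hg.aestronglyMeasurable]
    rw [l1, hcdef, l2]
  have hCeq : ∫ ω, (μ[(fun ω' => g (X₁ ω', X₂ ω'))|MeasurableSpace.comap X₁ inferInstance]) ω ∂μ
      = c := (integral_condExp hm).trans hVeq
  have hVWint : Integrable (fun ω => g (X₁ ω, X₂ ω) * g (X₁ ω, Y₂ ω)) μ := by
    have := (integrable_map_measure hGmeas.aestronglyMeasurable hA.aemeasurable).mp
      (by rw [hAmap]; exact hGint)
    simpa [hGdef, Function.comp_def] using this
  have hCCint : Integrable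
      (fun ω => (μ[(fun ω' => g (X₁ ω', X₂ ω'))|MeasurableSpace.comap X₁ inferInstance]) ω *
        (μ[(fun ω' => g (X₁ ω', X₂ ω'))|MeasurableSpace.comap X₁ inferInstance]) ω) μ := by
    refine hhX2int.congr (hcond.mono fun ω hω => ?_)
    simpa [pow_two] using congrArg (fun t : ℝ => t * t) hω
  rw [hWeq, hCeq]
  have lhs2 : ∫ ω, (g (X₁ ω, X₂ ω) - c) * (g (X₁ ω, Y₂ ω) - c) ∂μ =
      (∫ ω, g (X₁ ω, X₂ ω) * g (X₁ ω, Y₂ ω) ∂μ) - c ^ 2 := by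
    rw [expand_cov c hVint hWint hVWint, hWeq, hVeq]; ring
  have rhs2 : ∫ ω, ((μ[(fun ω' => g (X₁ ω', X₂ ω'))|MeasurableSpace.comap X₁ inferInstance]) ω
        - c) ^ 2 ∂μ =
      (∫ ω, (μ[(fun ω' => g (X₁ ω', X₂ ω'))|MeasurableSpace.comap X₁ inferInstance]) ω ^ 2 ∂μ)
        - c ^ 2 := by
    simp_rw [pow_two]
    rw [expand_cov c integrable_condExp integrable_condExp hCCint, hCeq]; ring
  rw [lhs2, rhs2, goal1]
end

section
/- Let N ∈ ℕ₊ and let X = (X₁,…,X_N) be a random vector with independent coordinates (X_i taking values in a measurable space S_i). Let (Y_{i,j})_{i∈{1,…,N}, j∈ℕ₊} be a jointly independent family of random variables with Y_{i,j} having the same distribution as X_i for every j. Let f be a measurable real-valued function on S₁×…×S_N with f(X) square-integrable. For v ∈ ℕ₊^N write Y_v = (Y_{1,v₁}, …, Y_{N,v_N}), and for a finite nonempty set A ⊂ ℕ₊^N put Z̄ = (1/|A|) Σ_{v∈A} f(Y_v). Then (1/|A|)·Var(f(X)) ≤ Var(Z̄) ≤ Var(f(X)). -/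
open MeasureTheory ProbabilityTheory

section Helpers

variable {Ω : Type*} {mΩ : MeasurableSpace Ω} {μ : Measure Ω}

lemma my_iIndep_precomp {ι ι' : Type*} {n : ι → MeasurableSpace Ω} (g : ι' → ι)
    (hg : Function.Injective g) (h : iIndep n μ) : iIndep (fun i => n (g i)) μ := by
  classical
  rw [iIndep_iff] at h ⊢
  intro S s hs
  set t : ι → Set Ω := fun i => ⋂ j ∈ S.filter (fun j' => g j' = i), s j with ht
  have hfil : ∀ j ∈ S, S.filter (fun j' => g j' = g j) = {j} := by
    intro j hj
    ext a
    simp only [Finset.mem_filter, Finset.mem_singleton, hg.eq_iff]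
    exact ⟨fun h => h.2, fun h => ⟨h ▸ hj, h⟩⟩
  have htj : ∀ j ∈ S, t (g j) = s j := by
    intro j hj
    rw [ht]
    simp only [hfil j hj]
    simp
  have key := h (S.image g) (f := t) ?_
  · rw [Finset.set_biInter_finset_image, Finset.prod_image (fun a _ b _ hab => hg hab)] at key
    calc μ (⋂ j ∈ S, s j) = μ (⋂ j ∈ S, t (g j)) := by
          congr 1; exact (Set.iInter₂_congr (fun j hj => htj j hj)).symm
      _ = ∏ j ∈ S, μ (t (g j)) := key
      _ = ∏ j ∈ S, μ (s j) := Finset.prod_congr rfl fun j hj => by rw [htj j hj]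
  · intro i hi
    rcases Finset.mem_image.1 hi with ⟨j, hj, rfl⟩
    rw [htj j hj]
    exact hs j hj

lemma my_iIndepFun_precomp {ι ι' : Type*} {β : ι → Type*} {m : ∀ i, MeasurableSpace (β i)}
    {f : ∀ i, Ω → β i} (g : ι' → ι) (hg : Function.Injective g) (h : iIndepFun (m := m) f μ) :
    iIndepFun (m := fun i => m (g i)) (fun i => f (g i)) μ := by
  rw [iIndepFun_iff_iIndep] at h ⊢
  exact my_iIndep_precomp g hg h

lemma my_map_pi {ι : Type*} [Fintype ι] {β : ι → Type*} [∀ i, MeasurableSpace (β i)]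
    [IsProbabilityMeasure μ] {g : ∀ i, Ω → β i} (hm : ∀ i, Measurable (g i))
    (h : iIndepFun g μ) :
    μ.map (fun ω i => g i ω) = Measure.pi (fun i => μ.map (g i)) := by
  have hP : ∀ i, IsProbabilityMeasure (μ.map (g i)) :=
    fun i => Measure.isProbabilityMeasure_map (hm i).aemeasurable
  refine (Measure.pi_eq fun s hs => ?_).symm
  rw [Measure.map_apply (measurable_pi_lambda _ hm) (MeasurableSet.univ_pi hs)]
  have hpre : (fun ω i => g i ω) ⁻¹' (Set.pi Set.univ s) = ⋂ i ∈ Finset.univ, g i ⁻¹' s i := by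
    ext ω; simp [Set.mem_pi]
  rw [hpre, h.measure_inter_preimage_eq_mul Finset.univ (fun i _ => hs i)]
  exact Finset.prod_congr rfl fun i _ => (Measure.map_apply (hm i) (hs i)).symm

lemma my_sq_integral_le {α : Type*} [MeasurableSpace α] {ν : Measure α} [IsProbabilityMeasure ν]
    {h : α → ℝ} (hh : MemLp h 2 ν) : (∫ a, h a ∂ν) ^ 2 ≤ ∫ a, (h a) ^ 2 ∂ν := by
  have h1 := variance_nonneg h ν
  rw [variance_eq_sub hh] at h1
  simp only [Pi.pow_apply] at h1
  linarith

lemma my_integrable_mul {h g : Ω → ℝ} (hh : MemLp h 2 μ) (hg : MemLp g 2 μ) :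
    Integrable (fun ω => h ω * g ω) μ := by
  have h2 : Integrable (fun ω => h ω ^ 2) μ :=
    (memLp_two_iff_integrable_sq hh.aestronglyMeasurable).1 hh
  have g2 : Integrable (fun ω => g ω ^ 2) μ :=
    (memLp_two_iff_integrable_sq hg.aestronglyMeasurable).1 hg
  refine (h2.add g2).mono' (hh.aestronglyMeasurable.mul hg.aestronglyMeasurable) ?_
  filter_upwards with ω
  have : |h ω * g ω| ≤ h ω ^ 2 + g ω ^ 2 := by
    rw [abs_mul]
    nlinarith [sq_nonneg (|h ω| - |g ω|), sq_abs (h ω), sq_abs (g ω), abs_nonneg (h ω),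
      abs_nonneg (g ω)]
  simpa [abs_mul] using this

end Helpers

section Pair

variable {Ω : Type*} [MeasurableSpace Ω] {μ : Measure Ω} [IsProbabilityMeasure μ]
  {N : ℕ} {S : Fin N → Type*} [∀ i, MeasurableSpace (S i)]
  {Y : ∀ i : Fin N, ℕ → Ω → S i}
  {ν : ∀ i, Measure (S i)} [∀ i, IsProbabilityMeasure (ν i)]

lemma my_law_Yv (hYmeas : ∀ i j, Measurable (Y i j))
    (hYindep : iIndepFun
      (fun p : (i : Fin N) × ℕ => Y p.1 p.2) μ)
    (hYdist : ∀ i j, μ.map (Y i j) = ν i) (v : Fin N → ℕ) :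
    μ.map (fun ω i => Y i (v i) ω) = Measure.pi ν := by
  have hinj : Function.Injective (fun i : Fin N => (⟨i, v i⟩ : (i : Fin N) × ℕ)) :=
    fun a b h => (Sigma.mk.inj_iff.mp h).1
  rw [my_map_pi (fun i => hYmeas i (v i))
    (my_iIndepFun_precomp (fun i : Fin N => (⟨i, v i⟩ : (i : Fin N) × ℕ)) hinj hYindep)]
  congr 1
  funext i
  exact hYdist i (v i)

lemma my_pair_bound (hYmeas : ∀ i j, Measurable (Y i j))
    (hYindep : iIndepFun
      (fun p : (i : Fin N) × ℕ => Y p.1 p.2) μ)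
    (hYdist : ∀ i j, μ.map (Y i j) = ν i)
    {f : (∀ i, S i) → ℝ} (hfmeas : Measurable f)
    (hfL2 : MemLp f 2 (Measure.pi ν)) (v w : Fin N → ℕ) :
    (∫ x, f x ∂(Measure.pi ν)) ^ 2
        ≤ ∫ ω, f (fun i => Y i (v i) ω) * f (fun i => Y i (w i) ω) ∂μ ∧
      ∫ ω, f (fun i => Y i (v i) ω) * f (fun i => Y i (w i) ω) ∂μ
        ≤ ∫ x, (f x) ^ 2 ∂(Measure.pi ν) := by
  classical
  -- the two coordinate processes and their L² properties
  set Pv : Ω → ℝ := fun ω => f (fun i => Y i (v i) ω) with hPv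
  set Pw : Ω → ℝ := fun ω => f (fun i => Y i (w i) ω) with hPw
  have hYv : Measurable (fun ω i => Y i (v i) ω) :=
    measurable_pi_lambda _ (fun i => hYmeas i (v i))
  have hYw : Measurable (fun ω i => Y i (w i) ω) :=
    measurable_pi_lambda _ (fun i => hYmeas i (w i))
  have hlawv := my_law_Yv hYmeas hYindep hYdist v
  have hlaww := my_law_Yv hYmeas hYindep hYdist w
  have hfL2v : MemLp f 2 (μ.map (fun ω i => Y i (v i) ω)) := by rw [hlawv]; exact hfL2
  have hfL2w : MemLp f 2 (μ.map (fun ω i => Y i (w i) ω)) := by rw [hlaww]; exact hfL2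
  have hPvL2 : MemLp Pv 2 μ :=
    (memLp_map_measure_iff hfmeas.aestronglyMeasurable hYv.aemeasurable).1 hfL2v
  have hPwL2 : MemLp Pw 2 μ :=
    (memLp_map_measure_iff hfmeas.aestronglyMeasurable hYw.aemeasurable).1 hfL2w
  have hPv1 : ∫ ω, Pv ω ∂μ = ∫ x, f x ∂(Measure.pi ν) := by
    rw [← hlawv, integral_map hYv.aemeasurable hfmeas.aestronglyMeasurable]
  have hPv2 : ∫ ω, (Pv ω) ^ 2 ∂μ = ∫ x, (f x) ^ 2 ∂(Measure.pi ν) := by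
    rw [← hlawv, integral_map hYv.aemeasurable
      ((hfmeas.pow_const 2).aestronglyMeasurable)]
  -- the split into shared and private coordinates
  set glue : ((∀ i : {i : Fin N // v i = w i}, S i.1) ×
      (∀ i : {i : Fin N // ¬ v i = w i}, S i.1)) → ∀ i, S i :=
    fun q i => if h : v i = w i then q.1 ⟨i, h⟩ else q.2 ⟨i, h⟩ with hglue_def
  have hglue : Measurable glue := by
    refine measurable_pi_lambda _ (fun i => ?_)
    by_cases h : v i = w i
    · simp only [hglue_def, dif_pos h]
      exact (measurable_pi_apply _).comp measurable_fst
    · simp only [hglue_def, dif_neg h]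
      exact (measurable_pi_apply _).comp measurable_snd
  set F : ((∀ i : {i : Fin N // v i = w i}, S i.1) ×
      (∀ i : {i : Fin N // ¬ v i = w i}, S i.1)) → ℝ := fun q => f (glue q) with hF_def
  have hF : Measurable F := hfmeas.comp hglue
  set U : Ω → ∀ i : {i : Fin N // v i = w i}, S i.1 := fun ω i => Y i.1 (v i.1) ω with hU_def
  set V : Ω → ∀ i : {i : Fin N // ¬ v i = w i}, S i.1 := fun ω i => Y i.1 (v i.1) ω with hV_def
  set W : Ω → ∀ i : {i : Fin N // ¬ v i = w i}, S i.1 := fun ω i => Y i.1 (w i.1) ω with hW_def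
  have hUmeas : Measurable U := measurable_pi_lambda _ (fun i => hYmeas i.1 (v i.1))
  have hVmeas : Measurable V := measurable_pi_lambda _ (fun i => hYmeas i.1 (v i.1))
  have hWmeas : Measurable W := measurable_pi_lambda _ (fun i => hYmeas i.1 (w i.1))
  have hgluev : ∀ ω, glue (U ω, V ω) = fun i => Y i (v i) ω := by
    intro ω; funext i
    by_cases h : v i = w i <;> simp [hglue_def, h, hU_def, hV_def]
  have hgluew : ∀ ω, glue (U ω, W ω) = fun i => Y i (w i) ω := by
    intro ω; funext i
    by_cases h : v i = w i
    · simp only [hglue_def, dif_pos h, hU_def]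
      rw [h]
    · simp [hglue_def, h, hW_def]
  -- laws of U, V, W
  set lU : Measure (∀ i : {i : Fin N // v i = w i}, S i.1) :=
    Measure.pi (fun i => ν i.1) with hlU_def
  set lV : Measure (∀ i : {i : Fin N // ¬ v i = w i}, S i.1) :=
    Measure.pi (fun i => ν i.1) with hlV_def
  have hUlaw : μ.map U = lU := by
    have hinj : Function.Injective
        (fun i : {i : Fin N // v i = w i} => (⟨i.1, v i.1⟩ : (i : Fin N) × ℕ)) :=
      fun a b h => Subtype.ext (Sigma.mk.inj_iff.mp h).1
    rw [my_map_pi (fun i => hYmeas i.1 (v i.1))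
      (my_iIndepFun_precomp (fun i : {i : Fin N // v i = w i} =>
        (⟨i.1, v i.1⟩ : (i : Fin N) × ℕ)) hinj hYindep)]
    congr 1
    funext i
    exact hYdist i.1 (v i.1)
  have hVlaw : μ.map V = lV := by
    have hinj : Function.Injective
        (fun i : {i : Fin N // ¬ v i = w i} => (⟨i.1, v i.1⟩ : (i : Fin N) × ℕ)) :=
      fun a b h => Subtype.ext (Sigma.mk.inj_iff.mp h).1
    rw [my_map_pi (fun i => hYmeas i.1 (v i.1))
      (my_iIndepFun_precomp (fun i : {i : Fin N // ¬ v i = w i} =>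
        (⟨i.1, v i.1⟩ : (i : Fin N) × ℕ)) hinj hYindep)]
    congr 1
    funext i
    exact hYdist i.1 (v i.1)
  have hWlaw : μ.map W = lV := by
    have hinj : Function.Injective
        (fun i : {i : Fin N // ¬ v i = w i} => (⟨i.1, w i.1⟩ : (i : Fin N) × ℕ)) :=
      fun a b h => Subtype.ext (Sigma.mk.inj_iff.mp h).1
    rw [my_map_pi (fun i => hYmeas i.1 (w i.1))
      (my_iIndepFun_precomp (fun i : {i : Fin N // ¬ v i = w i} =>
        (⟨i.1, w i.1⟩ : (i : Fin N) × ℕ)) hinj hYindep)]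
    congr 1
    funext i
    exact hYdist i.1 (w i.1)
  -- independence via disjoint index finsets
  set SU : Finset ((i : Fin N) × ℕ) :=
    Finset.univ.image (fun i : {i : Fin N // v i = w i} => (⟨i.1, v i.1⟩ : (i : Fin N) × ℕ))
    with hSU_def
  set SV : Finset ((i : Fin N) × ℕ) :=
    Finset.univ.image (fun i : {i : Fin N // ¬ v i = w i} => (⟨i.1, v i.1⟩ : (i : Fin N) × ℕ))
    with hSV_def
  set SW : Finset ((i : Fin N) × ℕ) :=
    Finset.univ.image (fun i : {i : Fin N // ¬ v i = w i} => (⟨i.1, w i.1⟩ : (i : Fin N) × ℕ))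
    with hSW_def
  have hmemU : ∀ i : {i : Fin N // v i = w i}, (⟨i.1, v i.1⟩ : (i : Fin N) × ℕ) ∈ SU :=
    fun i => Finset.mem_image_of_mem _ (Finset.mem_univ i)
  have hmemV : ∀ i : {i : Fin N // ¬ v i = w i}, (⟨i.1, v i.1⟩ : (i : Fin N) × ℕ) ∈ SV :=
    fun i => Finset.mem_image_of_mem _ (Finset.mem_univ i)
  have hmemW : ∀ i : {i : Fin N // ¬ v i = w i}, (⟨i.1, w i.1⟩ : (i : Fin N) × ℕ) ∈ SW :=
    fun i => Finset.mem_image_of_mem _ (Finset.mem_univ i)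
  have hdVW : Disjoint SV SW := by
    rw [Finset.disjoint_left]
    rintro p hp hq
    obtain ⟨a, -, rfl⟩ := Finset.mem_image.1 hp
    obtain ⟨b, -, hb⟩ := Finset.mem_image.1 hq
    obtain ⟨h1, h2⟩ := Sigma.mk.inj_iff.1 hb
    exact a.2 (by rw [← h1] at *; exact ((eq_of_heq h2).symm.trans (congrArg w h1)).symm ▸ rfl)
  have hdUVW : Disjoint SU (SV ∪ SW) := by
    rw [Finset.disjoint_union_right]
    constructor
    · rw [Finset.disjoint_left]
      rintro p hp hq
      obtain ⟨a, -, rfl⟩ := Finset.mem_image.1 hp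
      obtain ⟨b, -, hb⟩ := Finset.mem_image.1 hq
      obtain ⟨h1, -⟩ := Sigma.mk.inj_iff.1 hb
      exact b.2 (h1 ▸ a.2)
    · rw [Finset.disjoint_left]
      rintro p hp hq
      obtain ⟨a, -, rfl⟩ := Finset.mem_image.1 hp
      obtain ⟨b, -, hb⟩ := Finset.mem_image.1 hq
      obtain ⟨h1, -⟩ := Sigma.mk.inj_iff.1 hb
      exact b.2 (h1 ▸ a.2)
  have hYp : ∀ p : (i : Fin N) × ℕ, Measurable (Y p.1 p.2) := fun p => hYmeas p.1 p.2
  have hVW : IndepFun V W μ := by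
    have h0 := hYindep.indepFun_finset SV SW hdVW hYp
    have hφ : Measurable (fun (g : ∀ p : SV, S (p : (i : Fin N) × ℕ).1)
        (i : {i : Fin N // ¬ v i = w i}) => g ⟨⟨i.1, v i.1⟩, hmemV i⟩) :=
      measurable_pi_lambda _ (fun i => measurable_pi_apply _)
    have hψ : Measurable (fun (g : ∀ p : SW, S (p : (i : Fin N) × ℕ).1)
        (i : {i : Fin N // ¬ v i = w i}) => g ⟨⟨i.1, w i.1⟩, hmemW i⟩) :=
      measurable_pi_lambda _ (fun i => measurable_pi_apply _)
    exact h0.comp hφ hψ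
  have hUVW : IndepFun U (fun ω => (V ω, W ω)) μ := by
    have h0 := hYindep.indepFun_finset SU (SV ∪ SW) hdUVW hYp
    have hφ : Measurable (fun (g : ∀ p : SU, S (p : (i : Fin N) × ℕ).1)
        (i : {i : Fin N // v i = w i}) => g ⟨⟨i.1, v i.1⟩, hmemU i⟩) :=
      measurable_pi_lambda _ (fun i => measurable_pi_apply _)
    have hψ : Measurable (fun (g : ∀ p : ↥(SV ∪ SW), S (p : (i : Fin N) × ℕ).1) =>
        ((fun i : {i : Fin N // ¬ v i = w i} =>
            g ⟨⟨i.1, v i.1⟩, Finset.mem_union_left _ (hmemV i)⟩),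
         (fun i : {i : Fin N // ¬ v i = w i} =>
            g ⟨⟨i.1, w i.1⟩, Finset.mem_union_right _ (hmemW i)⟩))) := by
      refine Measurable.prodMk ?_ ?_ <;>
        exact measurable_pi_lambda _ (fun i => measurable_pi_apply _)
    exact h0.comp hφ hψ
  have hUV : IndepFun U V μ := by
    have hd : Disjoint SU SV := (Finset.disjoint_union_right.1 hdUVW).1
    have h0 := hYindep.indepFun_finset SU SV hd hYp
    have hφ : Measurable (fun (g : ∀ p : SU, S (p : (i : Fin N) × ℕ).1)
        (i : {i : Fin N // v i = w i}) => g ⟨⟨i.1, v i.1⟩, hmemU i⟩) :=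
      measurable_pi_lambda _ (fun i => measurable_pi_apply _)
    have hψ : Measurable (fun (g : ∀ p : SV, S (p : (i : Fin N) × ℕ).1)
        (i : {i : Fin N // ¬ v i = w i}) => g ⟨⟨i.1, v i.1⟩, hmemV i⟩) :=
      measurable_pi_lambda _ (fun i => measurable_pi_apply _)
    exact h0.comp hφ hψ
  -- product laws
  have hmapVW : μ.map (fun ω => (V ω, W ω)) = lV.prod lV := by
    rw [(indepFun_iff_map_prod_eq_prod_map_map hVmeas.aemeasurable hWmeas.aemeasurable).1 hVW,
      hVlaw, hWlaw]
  have hmapUVW : μ.map (fun ω => (U ω, (V ω, W ω))) = lU.prod (lV.prod lV) := by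
    rw [(indepFun_iff_map_prod_eq_prod_map_map hUmeas.aemeasurable
      ((hVmeas.prodMk hWmeas)).aemeasurable).1 hUVW, hUlaw, hmapVW]
  have hmapUV : μ.map (fun ω => (U ω, V ω)) = lU.prod lV := by
    rw [(indepFun_iff_map_prod_eq_prod_map_map hUmeas.aemeasurable hVmeas.aemeasurable).1 hUV,
      hUlaw, hVlaw]
  have hTmeas : Measurable (fun ω => (U ω, (V ω, W ω))) :=
    hUmeas.prodMk (hVmeas.prodMk hWmeas)
  have hUVmeas : Measurable (fun ω => (U ω, V ω)) := hUmeas.prodMk hVmeas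
  -- integrand on the triple product
  have hHmeas : Measurable (fun q : (∀ i : {i : Fin N // v i = w i}, S i.1) ×
      ((∀ i : {i : Fin N // ¬ v i = w i}, S i.1) × (∀ i : {i : Fin N // ¬ v i = w i}, S i.1)) =>
      F (q.1, q.2.1) * F (q.1, q.2.2)) :=
    (hF.comp (measurable_fst.prodMk (measurable_fst.comp measurable_snd))).mul
      (hF.comp (measurable_fst.prodMk (measurable_snd.comp measurable_snd)))
  have hcompH : ((fun q : (∀ i : {i : Fin N // v i = w i}, S i.1) ×
      ((∀ i : {i : Fin N // ¬ v i = w i}, S i.1) × (∀ i : {i : Fin N // ¬ v i = w i}, S i.1)) =>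
      F (q.1, q.2.1) * F (q.1, q.2.2)) ∘ (fun ω => (U ω, (V ω, W ω))))
      = fun ω => Pv ω * Pw ω := by
    funext ω
    simp only [Function.comp_apply, hF_def, hPv, hPw]
    rw [hgluev ω, hgluew ω]
  have hH : Integrable (fun q : (∀ i : {i : Fin N // v i = w i}, S i.1) ×
      ((∀ i : {i : Fin N // ¬ v i = w i}, S i.1) × (∀ i : {i : Fin N // ¬ v i = w i}, S i.1)) =>
      F (q.1, q.2.1) * F (q.1, q.2.2)) (lU.prod (lV.prod lV)) := by
    rw [← hmapUVW, integrable_map_measure hHmeas.aestronglyMeasurable hTmeas.aemeasurable,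
      hcompH]
    exact my_integrable_mul hPvL2 hPwL2
  have e1 : ∫ ω, Pv ω * Pw ω ∂μ
      = ∫ q, F (q.1, q.2.1) * F (q.1, q.2.2) ∂(lU.prod (lV.prod lV)) := by
    rw [← hmapUVW, integral_map hTmeas.aemeasurable hHmeas.aestronglyMeasurable]
    exact (integral_congr_ae (Filter.Eventually.of_forall fun ω =>
      (congrFun hcompH ω))).symm
  set g : (∀ i : {i : Fin N // v i = w i}, S i.1) → ℝ :=
    fun a => ∫ b, F (a, b) ∂lV with hg_def
  have e2 : ∫ q, F (q.1, q.2.1) * F (q.1, q.2.2) ∂(lU.prod (lV.prod lV))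
      = ∫ a, (g a) ^ 2 ∂lU := by
    rw [MeasureTheory.integral_prod _ hH]
    refine integral_congr_ae (Filter.Eventually.of_forall fun a => ?_)
    have h := integral_prod_mul (μ := lV) (ν := lV) (f := fun b => F (a, b))
      (g := fun b => F (a, b))
    simpa [pow_two, hg_def] using h
  -- F on the pair product
  have hcompF : ((fun q : (∀ i : {i : Fin N // v i = w i}, S i.1) ×
      (∀ i : {i : Fin N // ¬ v i = w i}, S i.1) => F q) ∘ (fun ω => (U ω, V ω))) = Pv := by
    funext ω
    simp only [Function.comp_apply, hF_def, hPv]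
    rw [hgluev ω]
  have hFint : Integrable F (lU.prod lV) := by
    rw [← hmapUV, integrable_map_measure hF.aestronglyMeasurable hUVmeas.aemeasurable, hcompF]
    exact hPvL2.integrable one_le_two
  have hF2int : Integrable (fun q => (F q) ^ 2) (lU.prod lV) := by
    rw [← hmapUV, integrable_map_measure (hF.pow_const 2).aestronglyMeasurable
      hUVmeas.aemeasurable]
    have : ((fun q => (F q) ^ 2) ∘ (fun ω => (U ω, V ω))) = fun ω => (Pv ω) ^ 2 := by
      funext ω
      simp only [Function.comp_apply]
      rw [← congrFun hcompF ω]
      rfl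
    rw [this]
    exact hPvL2.integrable_sq
  have e3 : ∫ a, g a ∂lU = ∫ ω, Pv ω ∂μ := by
    have h1 : ∫ q, F q ∂(lU.prod lV) = ∫ ω, Pv ω ∂μ := by
      rw [← hmapUV, integral_map hUVmeas.aemeasurable hF.aestronglyMeasurable]
      exact integral_congr_ae (Filter.Eventually.of_forall fun ω => congrFun hcompF ω)
    rw [← h1, MeasureTheory.integral_prod _ hFint]
  have e4 : ∫ q, (F q) ^ 2 ∂(lU.prod lV) = ∫ ω, (Pv ω) ^ 2 ∂μ := by
    rw [← hmapUV, integral_map hUVmeas.aemeasurable (hF.pow_const 2).aestronglyMeasurable]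
    refine integral_congr_ae (Filter.Eventually.of_forall fun ω => ?_)
    exact congrArg (· ^ 2) (congrFun hcompF ω)
  -- g is square integrable and Jensen bounds
  have gmeas : StronglyMeasurable g := hF.stronglyMeasurable.integral_prod_right'
  have hsec : ∀ᵐ a ∂lU, Integrable (fun b => (F (a, b)) ^ 2) lV := by
    have := hF2int.prod_right_ae
    exact this
  have hjensen : ∀ᵐ a ∂lU, (g a) ^ 2 ≤ ∫ b, (F (a, b)) ^ 2 ∂lV := by
    filter_upwards [hsec] with a ha
    exact my_sq_integral_le ((memLp_two_iff_integrable_sq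
      ((hF.comp measurable_prodMk_left).aestronglyMeasurable)).2 ha)
  have hGa : Integrable (fun a => ∫ b, (F (a, b)) ^ 2 ∂lV) lU := hF2int.integral_prod_left
  have hg2meas : AEStronglyMeasurable (fun a => (g a) ^ 2) lU := by
    refine ((gmeas.mul gmeas).aestronglyMeasurable).congr
      (Filter.Eventually.of_forall fun a => ?_)
    exact (pow_two (g a)).symm
  have hg2int : Integrable (fun a => (g a) ^ 2) lU := by
    refine hGa.mono' hg2meas ?_
    filter_upwards [hjensen] with a ha
    rw [Real.norm_eq_abs, abs_of_nonneg (sq_nonneg _)]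
    exact ha
  have hgL2 : MemLp g 2 lU := (memLp_two_iff_integrable_sq gmeas.aestronglyMeasurable).2 hg2int
  constructor
  · -- lower bound
    calc (∫ x, f x ∂(Measure.pi ν)) ^ 2 = (∫ ω, Pv ω ∂μ) ^ 2 := by rw [hPv1]
      _ = (∫ a, g a ∂lU) ^ 2 := by rw [e3]
      _ ≤ ∫ a, (g a) ^ 2 ∂lU := my_sq_integral_le hgL2
      _ = ∫ ω, Pv ω * Pw ω ∂μ := by rw [← e2, ← e1]
  · calc ∫ ω, Pv ω * Pw ω ∂μ = ∫ a, (g a) ^ 2 ∂lU := by rw [e1, e2]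
      _ ≤ ∫ a, ∫ b, (F (a, b)) ^ 2 ∂lV ∂lU := integral_mono_ae hg2int hGa hjensen
      _ = ∫ q, (F q) ^ 2 ∂(lU.prod lV) := (MeasureTheory.integral_prod _ hF2int).symm
      _ = ∫ x, (f x) ^ 2 ∂(Measure.pi ν) := by rw [e4, hPv2]

end Pair

/-- Let `X = (X₁,…,X_N)` have independent coordinates, and `(Y_{i,j})` be a
jointly independent family with `Y_{i,j} ~ X_i`. For measurable `f` with `f(X)`
square-integrable and a finite nonempty `A ⊂ ℕ₊^N`, the average
`Z̄ = (1/|A|) ∑_{v∈A} f(Y_v)` (with `Y_v = (Y_{1,v₁},…,Y_{N,v_N})`) satisfies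
`(1/|A|)·Var(f(X)) ≤ Var(Z̄) ≤ Var(f(X))`, where `Var(W) = E(W²) − (E W)²`. -/
theorem stmt7 {Ω : Type*} [MeasurableSpace Ω]
    (μ : Measure Ω) [IsProbabilityMeasure μ]
    (N : ℕ) (hN : 0 < N) (S : Fin N → Type*) [∀ i, MeasurableSpace (S i)]
    (X : ∀ i, Ω → S i) (hXmeas : ∀ i, Measurable (X i))
    (hXindep : iIndepFun X μ)
    (Y : ∀ i : Fin N, ℕ → Ω → S i) (hYmeas : ∀ i j, Measurable (Y i j))
    (hYindep : iIndepFun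
      (fun p : (i : Fin N) × ℕ => Y p.1 p.2) μ)
    (hYdist : ∀ i j, IdentDistrib (Y i j) (X i) μ μ)
    (f : (∀ i, S i) → ℝ) (hfmeas : Measurable f)
    (hf2 : MemLp (fun ω => f (fun i => X i ω)) 2 μ)
    (A : Finset (Fin N → ℕ)) (hA : A.Nonempty)
    (Zbar : Ω → ℝ)
    (hZbar : Zbar = fun ω => (A.card : ℝ)⁻¹ * ∑ v ∈ A, f (fun i => Y i (v i) ω)) :
    ((A.card : ℝ)⁻¹ *
        (∫ ω, (f (fun i => X i ω)) ^ 2 ∂μ - (∫ ω, f (fun i => X i ω) ∂μ) ^ 2) ≤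
      ∫ ω, Zbar ω ^ 2 ∂μ - (∫ ω, Zbar ω ∂μ) ^ 2) ∧
    (∫ ω, Zbar ω ^ 2 ∂μ - (∫ ω, Zbar ω ∂μ) ^ 2 ≤
      ∫ ω, (f (fun i => X i ω)) ^ 2 ∂μ - (∫ ω, f (fun i => X i ω) ∂μ) ^ 2) := by
  classical
  set ν : ∀ i, Measure (S i) := fun i => μ.map (X i) with hν_def
  haveI : ∀ i, IsProbabilityMeasure (ν i) :=
    fun i => Measure.isProbabilityMeasure_map (hXmeas i).aemeasurable
  have hXvec : Measurable (fun ω i => X i ω) := measurable_pi_lambda _ hXmeas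
  have hlawX : μ.map (fun ω i => X i ω) = Measure.pi ν := my_map_pi hXmeas hXindep
  have hfL2 : MemLp f 2 (Measure.pi ν) := by
    rw [← hlawX]
    exact (memLp_map_measure_iff hfmeas.aestronglyMeasurable hXvec.aemeasurable).2 hf2
  have hYdist' : ∀ i j, μ.map (Y i j) = ν i := fun i j => (hYdist i j).map_eq
  set m1 := ∫ x, f x ∂(Measure.pi ν) with hm1
  set m2 := ∫ x, (f x) ^ 2 ∂(Measure.pi ν) with hm2
  have hX1 : ∫ ω, f (fun i => X i ω) ∂μ = m1 := by
    rw [hm1, ← hlawX, integral_map hXvec.aemeasurable hfmeas.aestronglyMeasurable]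
  have hX2 : ∫ ω, (f (fun i => X i ω)) ^ 2 ∂μ = m2 := by
    rw [hm2, ← hlawX, integral_map hXvec.aemeasurable (hfmeas.pow_const 2).aestronglyMeasurable]
  set P : (Fin N → ℕ) → Ω → ℝ := fun v ω => f (fun i => Y i (v i) ω) with hP_def
  have hYv : ∀ v : Fin N → ℕ, Measurable (fun ω i => Y i (v i) ω) :=
    fun v => measurable_pi_lambda _ (fun i => hYmeas i (v i))
  have hlawYv : ∀ v : Fin N → ℕ, μ.map (fun ω i => Y i (v i) ω) = Measure.pi ν :=
    fun v => my_law_Yv hYmeas hYindep hYdist' v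
  have hPL2 : ∀ v : Fin N → ℕ, MemLp (P v) 2 μ := fun v =>
    (memLp_map_measure_iff hfmeas.aestronglyMeasurable (hYv v).aemeasurable).1
      (by rw [hlawYv v]; exact hfL2)
  have hP1 : ∀ v : Fin N → ℕ, ∫ ω, P v ω ∂μ = m1 := fun v => by
    rw [hm1, ← hlawYv v, integral_map (hYv v).aemeasurable hfmeas.aestronglyMeasurable]
  have hP2 : ∀ v : Fin N → ℕ, ∫ ω, (P v ω) ^ 2 ∂μ = m2 := fun v => by
    rw [hm2, ← hlawYv v,
      integral_map (hYv v).aemeasurable (hfmeas.pow_const 2).aestronglyMeasurable]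
  have key : ∀ v w : Fin N → ℕ, m1 ^ 2 ≤ ∫ ω, P v ω * P w ω ∂μ ∧
      ∫ ω, P v ω * P w ω ∂μ ≤ m2 :=
    fun v w => my_pair_bound hYmeas hYindep hYdist' hfmeas hfL2 v w
  have hPmul : ∀ v w : Fin N → ℕ, Integrable (fun ω => P v ω * P w ω) μ :=
    fun v w => my_integrable_mul (hPL2 v) (hPL2 w)
  have hCvv : ∀ v : Fin N → ℕ, ∫ ω, P v ω * P v ω ∂μ = m2 := fun v => by
    have h : (fun ω => P v ω * P v ω) = fun ω => (P v ω) ^ 2 :=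
      funext fun ω => (pow_two _).symm
    rw [h, hP2 v]
  set c : ℝ := (A.card : ℝ) with hc_def
  have hc0 : 0 < c := by
    rw [hc_def]; exact_mod_cast Finset.card_pos.2 hA
  have hZb : ∀ ω, Zbar ω = c⁻¹ * ∑ v ∈ A, P v ω := fun ω => by rw [hZbar]
  have hZ1 : ∫ ω, Zbar ω ∂μ = m1 := by
    simp only [hZb]
    rw [integral_const_mul, integral_finset_sum _ (fun v _ => (hPL2 v).integrable one_le_two)]
    rw [Finset.sum_congr rfl (fun v _ => hP1 v), Finset.sum_const, nsmul_eq_mul]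
    rw [← mul_assoc, inv_mul_cancel₀ (ne_of_gt hc0), one_mul]
  have hZ2 : ∫ ω, (Zbar ω) ^ 2 ∂μ
      = c⁻¹ ^ 2 * ∑ v ∈ A, ∑ w ∈ A, ∫ ω, P v ω * P w ω ∂μ := by
    have hsq : ∀ ω, (Zbar ω) ^ 2 = c⁻¹ ^ 2 * ∑ v ∈ A, ∑ w ∈ A, P v ω * P w ω := by
      intro ω
      rw [hZb ω, mul_pow, ← Finset.sum_mul_sum, pow_two]
      ring
    simp only [hsq]
    rw [integral_const_mul,
      integral_finset_sum _ (fun v _ => integrable_finset_sum _ (fun w _ => hPmul v w))]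
    congr 1
    refine Finset.sum_congr rfl fun v _ => ?_
    rw [integral_finset_sum _ (fun w _ => hPmul v w)]
  -- rewrite variance of Zbar as an average of centered correlations
  have hm1sq : c⁻¹ ^ 2 * ∑ v ∈ A, ∑ w ∈ A, m1 ^ 2 = m1 ^ 2 := by
    rw [Finset.sum_const, Finset.sum_const, nsmul_eq_mul, nsmul_eq_mul, ← hc_def]
    have hcne : c ≠ 0 := ne_of_gt hc0
    field_simp
  have hvar : ∫ ω, (Zbar ω) ^ 2 ∂μ - (∫ ω, Zbar ω ∂μ) ^ 2
      = c⁻¹ ^ 2 * ∑ v ∈ A, ∑ w ∈ A, ((∫ ω, P v ω * P w ω ∂μ) - m1 ^ 2) := by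
    have hsplit : ∑ v ∈ A, ∑ w ∈ A, ((∫ ω, P v ω * P w ω ∂μ) - m1 ^ 2)
        = (∑ v ∈ A, ∑ w ∈ A, ∫ ω, P v ω * P w ω ∂μ) - ∑ v ∈ A, ∑ w ∈ A, m1 ^ 2 := by
      rw [← Finset.sum_sub_distrib]
      exact Finset.sum_congr rfl fun v _ => Finset.sum_sub_distrib _ _
    rw [hZ2, hZ1, hsplit, mul_sub, hm1sq]
  rw [hX1, hX2, hvar]
  have hinv2 : (0:ℝ) ≤ c⁻¹ ^ 2 := by positivity
  constructor
  · -- lower bound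
    have hlb : c * (m2 - m1 ^ 2) ≤ ∑ v ∈ A, ∑ w ∈ A, ((∫ ω, P v ω * P w ω ∂μ) - m1 ^ 2) := by
      have h1 : ∀ v ∈ A, m2 - m1 ^ 2
          ≤ ∑ w ∈ A, ((∫ ω, P v ω * P w ω ∂μ) - m1 ^ 2) := by
        intro v hv
        have h2 := Finset.single_le_sum
          (f := fun w => (∫ ω, P v ω * P w ω ∂μ) - m1 ^ 2)
          (fun w _ => sub_nonneg.2 (key v w).1) hv
        calc m2 - m1 ^ 2 = (∫ ω, P v ω * P v ω ∂μ) - m1 ^ 2 := by rw [hCvv v]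
          _ ≤ _ := h2
      calc c * (m2 - m1 ^ 2) = ∑ _v ∈ A, (m2 - m1 ^ 2) := by
            rw [Finset.sum_const, nsmul_eq_mul, hc_def]
        _ ≤ _ := Finset.sum_le_sum h1
    calc c⁻¹ * (m2 - m1 ^ 2) = c⁻¹ ^ 2 * (c * (m2 - m1 ^ 2)) := by
          have hcne : c ≠ 0 := ne_of_gt hc0
          field_simp
      _ ≤ c⁻¹ ^ 2 * ∑ v ∈ A, ∑ w ∈ A, ((∫ ω, P v ω * P w ω ∂μ) - m1 ^ 2) :=
          mul_le_mul_of_nonneg_left hlb hinv2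
  · -- upper bound
    have hub : ∑ v ∈ A, ∑ w ∈ A, ((∫ ω, P v ω * P w ω ∂μ) - m1 ^ 2)
        ≤ c ^ 2 * (m2 - m1 ^ 2) := by
      have h1 : ∀ v ∈ A, ∑ w ∈ A, ((∫ ω, P v ω * P w ω ∂μ) - m1 ^ 2)
          ≤ c * (m2 - m1 ^ 2) := by
        intro v hv
        calc ∑ w ∈ A, ((∫ ω, P v ω * P w ω ∂μ) - m1 ^ 2)
            ≤ ∑ _w ∈ A, (m2 - m1 ^ 2) :=
              Finset.sum_le_sum (fun w _ => sub_le_sub_right (key v w).2 _)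
          _ = c * (m2 - m1 ^ 2) := by rw [Finset.sum_const, nsmul_eq_mul, hc_def]
      calc ∑ v ∈ A, ∑ w ∈ A, ((∫ ω, P v ω * P w ω ∂μ) - m1 ^ 2)
          ≤ ∑ _v ∈ A, (c * (m2 - m1 ^ 2)) := Finset.sum_le_sum h1
        _ = c * (c * (m2 - m1 ^ 2)) := by rw [Finset.sum_const, nsmul_eq_mul, hc_def]
        _ = c ^ 2 * (m2 - m1 ^ 2) := by ring
    calc c⁻¹ ^ 2 * ∑ v ∈ A, ∑ w ∈ A, ((∫ ω, P v ω * P w ω ∂μ) - m1 ^ 2)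
        ≤ c⁻¹ ^ 2 * (c ^ 2 * (m2 - m1 ^ 2)) := mul_le_mul_of_nonneg_left hub hinv2
      _ = m2 - m1 ^ 2 := by
          have hcne : c ≠ 0 := ne_of_gt hc0
          field_simp
end

section
/- Let n ≤ n′ be positive integers, let U be a random variable with values in a measurable space, and let V₁, …, V_{n′} be i.i.d. random variables (with values in a measurable space) that are independent of U. Let φ be a measurable real-valued function of (u, v₁,…,v_n) that is symmetric in its last n arguments, and suppose W = φ(U, V₁,…,V_n) is square-integrable. Define φ′ = (1/C(n′,n)) Σ_L φ(U, V_{l₁},…,V_{l_n}), where the sum is over all n-element subsets L = {l₁ < ⋯ < l_n} of {1,…,n′} and C(n′,n) is the binomial coefficient. Then (1/C(n′,n))·Var(W) ≤ Var(φ′) ≤ Var(W). -/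
open MeasureTheory ProbabilityTheory

lemma aux_pi_map_comp {β : Type*} [MeasurableSpace β] (ν : Measure β) [IsProbabilityMeasure ν]
    {ι κ : Type*} [Fintype ι] [Fintype κ] [DecidableEq κ]
    (e : ι → κ) (he : Function.Injective e) :
    (Measure.pi (fun _ : κ => ν)).map (fun v i => v (e i)) = Measure.pi (fun _ : ι => ν) := by
  refine (Measure.pi_eq fun s hs => ?_).symm
  rw [Measure.map_apply (by fun_prop) (MeasurableSet.univ_pi hs)]
  have hpre : (fun (v : κ → β) (i : ι) => v (e i)) ⁻¹' (Set.univ.pi s)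
      = Set.univ.pi (fun j => ⋂ (i : ι) (_ : e i = j), s i) := by
    ext v
    simp only [Set.mem_preimage, Set.mem_pi, Set.mem_univ, forall_true_left, Set.mem_iInter]
    constructor
    · intro h j i hij; subst hij; exact h i
    · intro h i; exact h (e i) i rfl
  rw [hpre, Measure.pi_pi]
  have h1 : ∀ i : ι, (⋂ (i' : ι) (_ : e i' = e i), s i') = s i := by
    intro i; ext x
    simp only [Set.mem_iInter]
    exact ⟨fun h => h i rfl, fun hx i' h => (he h) ▸ hx⟩
  have h2 : ∀ j : κ, j ∉ Finset.univ.image e → (⋂ (i : ι) (_ : e i = j), s i) = Set.univ := by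
    intro j hj; ext x
    simp only [Set.mem_iInter, Set.mem_univ, iff_true]
    intro i hij
    exact absurd (Finset.mem_image.2 ⟨i, Finset.mem_univ i, hij⟩) (hij ▸ hj)
  calc ∏ j : κ, ν (⋂ (i : ι) (_ : e i = j), s i)
      = ∏ j ∈ Finset.univ.image e, ν (⋂ (i : ι) (_ : e i = j), s i) := by
        refine (Finset.prod_subset (Finset.subset_univ _) ?_).symm
        intro j _ hj
        rw [h2 j hj, measure_univ]
    _ = ∏ i : ι, ν (⋂ (i' : ι) (_ : e i' = e i), s i') := by
        rw [Finset.prod_image]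
        intro i _ i' _ h; exact he h
    _ = ∏ i : ι, ν (s i) := by
        refine Finset.prod_congr rfl fun i _ => ?_
        rw [h1 i]

lemma aux_pi_map_piecewise {β : Type*} [MeasurableSpace β] (ν : Measure β)
    [IsProbabilityMeasure ν] {κ : Type*} [Fintype κ] [DecidableEq κ] (S : Finset κ) :
    ((Measure.pi fun _ : κ => ν).prod (Measure.pi fun _ : κ => ν)).map
      (fun p => S.piecewise p.1 p.2) = Measure.pi fun _ : κ => ν := by
  have hmeas : Measurable (fun p : (κ → β) × (κ → β) => S.piecewise p.1 p.2) := by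
    apply measurable_pi_lambda
    intro j
    by_cases h : j ∈ S <;> simp only [Finset.piecewise, h, if_pos, if_neg, if_true, if_false] <;>
      [exact (measurable_pi_apply j).comp measurable_fst;
       exact (measurable_pi_apply j).comp measurable_snd]
  refine (Measure.pi_eq fun s hs => ?_).symm
  rw [Measure.map_apply hmeas (MeasurableSet.univ_pi hs)]
  have hpre : (fun p : (κ → β) × (κ → β) => S.piecewise p.1 p.2) ⁻¹' (Set.univ.pi s)
      = (Set.univ.pi fun j => if j ∈ S then s j else Set.univ) ×ˢ
        (Set.univ.pi fun j => if j ∈ S then Set.univ else s j) := by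
    ext p
    simp only [Set.mem_preimage, Set.mem_pi, Set.mem_univ, forall_true_left, Set.mem_prod,
      Finset.piecewise]
    constructor
    · intro h
      constructor <;> intro j <;> by_cases hj : j ∈ S <;> simp only [hj, if_true, if_false] <;>
        first | exact Set.mem_univ _ | simpa [hj] using h j
    · intro ⟨h1, h2⟩ j
      by_cases hj : j ∈ S
      · have := h1 j; simpa [hj] using this
      · have := h2 j; simpa [hj] using this
  rw [hpre, Measure.prod_prod, Measure.pi_pi, Measure.pi_pi, ← Finset.prod_mul_distrib]
  refine Finset.prod_congr rfl fun j _ => ?_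
  by_cases hj : j ∈ S <;> simp [hj, measure_univ]


lemma aux_integrable_mul {Ω : Type*} [MeasurableSpace Ω] {μ : Measure Ω}
    {f g : Ω → ℝ} (hf : MemLp f 2 μ) (hg : MemLp g 2 μ) :
    Integrable (fun x => f x * g x) μ := by
  refine Integrable.mono' (((hf.integrable_sq.add hg.integrable_sq)).div_const 2)
    (hf.aestronglyMeasurable.mul hg.aestronglyMeasurable)
    (Filter.Eventually.of_forall fun x => ?_)
  simp only [Pi.add_apply]
  have h := sq_nonneg (|f x| - |g x|)
  have h2 : ‖f x * g x‖ = |f x| * |g x| := by rw [Real.norm_eq_abs, abs_mul]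
  rw [h2]
  nlinarith [sq_abs (f x), sq_abs (g x)]

lemma aux_factor {β : Type*} [MeasurableSpace β] (ν : Measure β) [IsProbabilityMeasure ν]
    {κ : Type*} [Fintype κ] [DecidableEq κ]
    (D₁ D₂ : Finset κ) (hD : Disjoint D₁ D₂)
    (F G : (κ → β) → ℝ) (hF : Measurable F) (hG : Measurable G)
    (hF1 : ∀ t t', (∀ j ∈ D₁, t j = t' j) → F t = F t')
    (hG1 : ∀ t t', (∀ j ∈ D₂, t j = t' j) → G t = G t') :
    ∫ t, F t * G t ∂(Measure.pi fun _ : κ => ν)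
      = (∫ t, F t ∂(Measure.pi fun _ : κ => ν)) * ∫ t, G t ∂(Measure.pi fun _ : κ => ν) := by
  haveI : Nonempty β := by
    by_contra h
    rw [not_nonempty_iff] at h
    have h1 : (Set.univ : Set β) = ∅ := Set.univ_eq_empty_iff.2 h
    have := measure_univ (μ := ν)
    rw [h1, measure_empty] at this
    exact zero_ne_one this
  classical
  set p : κ → Prop := fun j => j ∈ D₁ with hp
  set F₁ : ({j // p j} → β) → ℝ :=
    fun a => F (fun j => if h : p j then a ⟨j, h⟩ else Classical.arbitrary β) with hF₁
  set G₁ : ({j // ¬ p j} → β) → ℝ :=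
    fun b => G (fun j => if h : p j then Classical.arbitrary β else b ⟨j, h⟩) with hG₁
  have hFeq : ∀ t : κ → β, F t = F₁ (fun j => t j.1) := by
    intro t
    apply hF1
    intro j hj
    simp only [hF₁]
    rw [dif_pos (show p j from hj)]
  have hGeq : ∀ t : κ → β, G t = G₁ (fun j => t j.1) := by
    intro t
    apply hG1
    intro j hj
    have hnp : ¬ p j := fun hpj => (Finset.disjoint_left.1 hD) hpj hj
    simp only [hG₁]
    rw [dif_neg hnp]
  have hΨ := measurePreserving_piEquivPiSubtypeProd (fun _ : κ => ν) p
  have hEmb := (MeasurableEquiv.piEquivPiSubtypeProd (fun _ : κ => β) p).measurableEmbedding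
  have e1 := hΨ.integral_comp hEmb (fun q => F₁ q.1 * G₁ q.2)
  have e2 := hΨ.integral_comp hEmb (fun q => F₁ q.1 * (1:ℝ))
  have e3 := hΨ.integral_comp hEmb (fun q => (1:ℝ) * G₁ q.2)
  rw [integral_prod_mul] at e1
  simp only [mul_one, one_mul] at e2 e3
  rw [integral_fun_fst] at e2
  rw [integral_fun_snd] at e3
  simp only [probReal_univ, one_smul] at e2 e3
  have hL : (fun t => F t * G t) = fun t =>
      F₁ ((MeasurableEquiv.piEquivPiSubtypeProd (fun _ : κ => β) p) t).1 *
      G₁ ((MeasurableEquiv.piEquivPiSubtypeProd (fun _ : κ => β) p) t).2 := by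
    funext t
    exact congrArg₂ (· * ·) (hFeq t) (hGeq t)
  have hLF : (fun t => F t) = fun t =>
      F₁ ((MeasurableEquiv.piEquivPiSubtypeProd (fun _ : κ => β) p) t).1 := by
    funext t; exact hFeq t
  have hLG : (fun t => G t) = fun t =>
      G₁ ((MeasurableEquiv.piEquivPiSubtypeProd (fun _ : κ => β) p) t).2 := by
    funext t; exact hGeq t
  rw [hL, hLF, hLG, e1, e2, e3]


lemma aux_sym {α β : Type*} [MeasurableSpace α] [MeasurableSpace β]
    (ν : Measure β) [IsProbabilityMeasure ν]
    {n n' : ℕ} (hn : 0 < n)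
    (φ : α × (Fin n → β) → ℝ) (hφ : Measurable φ)
    (hsym : ∀ (σ : Equiv.Perm (Fin n)) (u : α) (v : Fin n → β), φ (u, v ∘ σ) = φ (u, v))
    (e₁ e₂ : Fin n → Fin n') (he₁ : Function.Injective e₁) (he₂ : Function.Injective e₂)
    (u : α) (v : Fin n' → β) :
    ∫ t, φ (u, fun i => (((Finset.univ.image e₁) ∩ (Finset.univ.image e₂)).piecewise v t) (e₂ i))
        ∂(Measure.pi fun _ : Fin n' => ν)
      = ∫ t, φ (u, fun i =>
          (((Finset.univ.image e₁) ∩ (Finset.univ.image e₂)).piecewise v t) (e₁ i))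
        ∂(Measure.pi fun _ : Fin n' => ν) := by
  set S : Finset (Fin n') := (Finset.univ.image e₁) ∩ (Finset.univ.image e₂) with hSdef
  haveI : Nonempty (Fin n) := ⟨⟨0, hn⟩⟩
  set r₁ := Function.invFun e₁ with hr₁def
  set r₂ := Function.invFun e₂ with hr₂def
  have hr₁ : ∀ i, r₁ (e₁ i) = i := Function.leftInverse_invFun he₁
  have hr₂ : ∀ i, r₂ (e₂ i) = i := Function.leftInverse_invFun he₂
  have hS₁ : ∀ j ∈ Finset.univ.image e₁, e₁ (r₁ j) = j := by
    intro j hj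
    obtain ⟨i, _, rfl⟩ := Finset.mem_image.1 hj
    rw [hr₁]
  have hS₂ : ∀ j ∈ Finset.univ.image e₂, e₂ (r₂ j) = j := by
    intro j hj
    obtain ⟨i, _, rfl⟩ := Finset.mem_image.1 hj
    rw [hr₂]
  have hmem₁ : ∀ j, j ∈ S → j ∈ Finset.univ.image e₁ := fun j hj => (Finset.mem_inter.1 hj).1
  have hmem₂ : ∀ j, j ∈ S → j ∈ Finset.univ.image e₂ := fun j hj => (Finset.mem_inter.1 hj).2
  set p₁ : Fin n → Prop := fun i => e₁ i ∈ S with hp₁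
  set p₂ : Fin n → Prop := fun i => e₂ i ∈ S with hp₂
  let epos : {i // p₂ i} ≃ {i // p₁ i} :=
  { toFun := fun x => ⟨r₁ (e₂ x.1), show e₁ (r₁ (e₂ x.1)) ∈ S by
      rw [hS₁ _ (hmem₁ _ x.2)]; exact x.2⟩
    invFun := fun y => ⟨r₂ (e₁ y.1), show e₂ (r₂ (e₁ y.1)) ∈ S by
      rw [hS₂ _ (hmem₂ _ y.2)]; exact y.2⟩
    left_inv := fun x => Subtype.ext (by
      show r₂ (e₁ (r₁ (e₂ x.1))) = x.1
      rw [hS₁ _ (hmem₁ _ x.2), hr₂])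
    right_inv := fun y => Subtype.ext (by
      show r₁ (e₂ (r₂ (e₁ y.1))) = y.1
      rw [hS₂ _ (hmem₂ _ y.2), hr₁]) }
  set σ : Equiv.Perm (Fin n) := epos.extendSubtype with hσdef
  have hσ1 : ∀ (i : Fin n) (h : p₂ i), e₁ (σ i) = e₂ i := by
    intro i h
    rw [hσdef, Equiv.extendSubtype_apply_of_mem epos i h]
    show e₁ (r₁ (e₂ i)) = e₂ i
    exact hS₁ _ (hmem₁ _ h)
  have hσ2 : ∀ (i : Fin n), ¬ p₂ i → ¬ p₁ (σ i) := fun i h =>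
    Equiv.extendSubtype_not_mem epos i h
  have hσmem : ∀ (i : Fin n), p₂ i → p₁ (σ i) := fun i h =>
    Equiv.extendSubtype_mem epos i h
  let eneg' : {i // ¬ p₂ i} ≃ {i // ¬ p₁ i} :=
    σ.subtypeEquiv fun i => ⟨fun h2 => hσ2 i h2, fun h1 h2 => h1 (hσmem i h2)⟩
  let E₂ : {i // ¬ p₂ i} ≃ {j // j ∈ (Finset.univ.image e₂) \ S} :=
  { toFun := fun x => ⟨e₂ x.1, Finset.mem_sdiff.2
      ⟨Finset.mem_image.2 ⟨x.1, Finset.mem_univ _, rfl⟩, x.2⟩⟩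
    invFun := fun j => ⟨r₂ j.1, fun h => by
      have hj := Finset.mem_sdiff.1 j.2
      exact hj.2 (by rw [← hS₂ _ hj.1]; exact h)⟩
    left_inv := fun x => Subtype.ext (hr₂ x.1)
    right_inv := fun j => Subtype.ext (hS₂ _ (Finset.mem_sdiff.1 j.2).1) }
  let E₁ : {i // ¬ p₁ i} ≃ {j // j ∈ (Finset.univ.image e₁) \ S} :=
  { toFun := fun x => ⟨e₁ x.1, Finset.mem_sdiff.2
      ⟨Finset.mem_image.2 ⟨x.1, Finset.mem_univ _, rfl⟩, x.2⟩⟩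
    invFun := fun j => ⟨r₁ j.1, fun h => by
      have hj := Finset.mem_sdiff.1 j.2
      exact hj.2 (by rw [← hS₁ _ hj.1]; exact h)⟩
    left_inv := fun x => Subtype.ext (hr₁ x.1)
    right_inv := fun j => Subtype.ext (hS₁ _ (Finset.mem_sdiff.1 j.2).1) }
  let Emid : {j // j ∈ (Finset.univ.image e₂) \ S} ≃ {j // j ∈ (Finset.univ.image e₁) \ S} :=
    E₂.symm.trans (eneg'.trans E₁)
  set ρ : Equiv.Perm (Fin n') := Emid.extendSubtype with hρdef
  have hρ : ∀ (i : Fin n), ¬ p₂ i → ρ (e₂ i) = e₁ (σ i) := by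
    intro i h
    have hq : e₂ i ∈ (Finset.univ.image e₂) \ S := Finset.mem_sdiff.2
      ⟨Finset.mem_image.2 ⟨i, Finset.mem_univ _, rfl⟩, h⟩
    rw [hρdef, Equiv.extendSubtype_apply_of_mem Emid _ hq]
    show e₁ (σ (r₂ (e₂ i))) = e₁ (σ i)
    rw [hr₂]
  have hmeas2 : Measurable (fun w : Fin n' → β => φ (u, fun i => S.piecewise v w (e₂ i))) := by
    apply hφ.comp
    apply measurable_const.prodMk
    apply measurable_pi_lambda
    intro i
    by_cases h : e₂ i ∈ S <;> simp only [Finset.piecewise, h, if_true, if_false]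
    · exact measurable_const
    · exact measurable_pi_apply _
  have hmapmeas : Measurable (fun (t : Fin n' → β) (j : Fin n') => t (ρ j)) := by
    exact measurable_pi_lambda _ fun j => measurable_pi_apply _
  have key : ∀ t : Fin n' → β,
      φ (u, fun i => S.piecewise v (fun j => t (ρ j)) (e₂ i))
        = φ (u, fun i => S.piecewise v t (e₁ i)) := by
    intro t
    rw [← hsym σ u (fun i => S.piecewise v t (e₁ i))]
    congr 1
    refine congrArg (Prod.mk u) ?_
    funext i
    show S.piecewise v (fun j => t (ρ j)) (e₂ i) = S.piecewise v t (e₁ (σ i))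
    by_cases h : e₂ i ∈ S
    · have h1 : e₁ (σ i) = e₂ i := hσ1 i h
      simp [Finset.piecewise, h, h1]
    · have h2 : e₁ (σ i) ∉ S := hσ2 i h
      have h3 : ρ (e₂ i) = e₁ (σ i) := hρ i h
      simp [Finset.piecewise, h, h2, h3]
  calc ∫ t, φ (u, fun i => S.piecewise v t (e₂ i)) ∂(Measure.pi fun _ : Fin n' => ν)
      = ∫ w, φ (u, fun i => S.piecewise v w (e₂ i))
          ∂((Measure.pi fun _ : Fin n' => ν).map (fun t j => t (ρ j))) := by
        rw [aux_pi_map_comp ν ρ ρ.injective]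
    _ = ∫ t, φ (u, fun i => S.piecewise v (fun j => t (ρ j)) (e₂ i))
          ∂(Measure.pi fun _ : Fin n' => ν) :=
        integral_map hmapmeas.aemeasurable hmeas2.aestronglyMeasurable
    _ = ∫ t, φ (u, fun i => S.piecewise v t (e₁ i)) ∂(Measure.pi fun _ : Fin n' => ν) :=
        integral_congr_ae (Filter.Eventually.of_forall key)


lemma aux_X {α β : Type*} [MeasurableSpace α] [MeasurableSpace β]
    (κ : Measure α) [IsProbabilityMeasure κ] (ν : Measure β) [IsProbabilityMeasure ν]
    {n n' : ℕ} (hn : 0 < n)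
    (φ : α × (Fin n → β) → ℝ) (hφ : Measurable φ)
    (hsym : ∀ (σ : Equiv.Perm (Fin n)) (u : α) (v : Fin n → β), φ (u, v ∘ σ) = φ (u, v))
    (e₁ e₂ : Fin n → Fin n') (he₁ : Function.Injective e₁) (he₂ : Function.Injective e₂)
    (h₁ : MemLp (fun p : α × (Fin n' → β) => φ (p.1, fun i => p.2 (e₁ i))) 2
      (κ.prod (Measure.pi fun _ : Fin n' => ν)))
    (h₂ : MemLp (fun p : α × (Fin n' → β) => φ (p.1, fun i => p.2 (e₂ i))) 2
      (κ.prod (Measure.pi fun _ : Fin n' => ν))) :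
    (∫ p, φ (p.1, fun i => p.2 (e₁ i)) ∂(κ.prod (Measure.pi fun _ : Fin n' => ν))) *
      (∫ p, φ (p.1, fun i => p.2 (e₂ i)) ∂(κ.prod (Measure.pi fun _ : Fin n' => ν)))
      ≤ ∫ p, φ (p.1, fun i => p.2 (e₁ i)) * φ (p.1, fun i => p.2 (e₂ i))
          ∂(κ.prod (Measure.pi fun _ : Fin n' => ν)) := by
  set π : Measure (Fin n' → β) := Measure.pi fun _ : Fin n' => ν with hπdef
  set P : Measure (α × (Fin n' → β)) := κ.prod π with hPdef
  set M : Measure ((α × (Fin n' → β)) × (Fin n' → β)) := P.prod π with hMdef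
  set S : Finset (Fin n') := (Finset.univ.image e₁) ∩ (Finset.univ.image e₂) with hSdef
  set f₁ : α × (Fin n' → β) → ℝ := fun p => φ (p.1, fun i => p.2 (e₁ i)) with hf₁def
  set f₂ : α × (Fin n' → β) → ℝ := fun p => φ (p.1, fun i => p.2 (e₂ i)) with hf₂def
  have hf₁m : Measurable f₁ := by
    apply hφ.comp
    exact measurable_fst.prodMk (measurable_pi_lambda _ fun i =>
      (measurable_pi_apply _).comp measurable_snd)
  have hf₂m : Measurable f₂ := by
    apply hφ.comp
    exact measurable_fst.prodMk (measurable_pi_lambda _ fun i =>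
      (measurable_pi_apply _).comp measurable_snd)
  have hpwm : Measurable (fun st : (Fin n' → β) × (Fin n' → β) => S.piecewise st.1 st.2) := by
    apply measurable_pi_lambda
    intro j
    by_cases h : j ∈ S <;> simp only [Finset.piecewise, h, if_true, if_false]
    · exact (measurable_pi_apply j).comp measurable_fst
    · exact (measurable_pi_apply j).comp measurable_snd
  set Θ : (α × (Fin n' → β)) × (Fin n' → β) → α × (Fin n' → β) :=
    fun q => (q.1.1, S.piecewise q.1.2 q.2) with hΘdef
  have hΘm : Measurable Θ :=
    (measurable_fst.comp measurable_fst).prodMk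
      (hpwm.comp ((measurable_snd.comp measurable_fst).prodMk measurable_snd))
  have hΘ : MeasurePreserving Θ M P := by
    have hpw : MeasurePreserving (fun st : (Fin n' → β) × (Fin n' → β) => S.piecewise st.1 st.2)
        (π.prod π) π := ⟨hpwm, aux_pi_map_piecewise ν S⟩
    have hassoc := (measurePreserving_prodAssoc κ π π)
    have hprodmap := (MeasurePreserving.id κ).prod hpw
    have hcomp := hprodmap.comp hassoc
    refine ⟨hΘm, ?_⟩
    rw [hMdef, hPdef]
    conv_rhs => rw [← hcomp.map_eq]
    rfl
  -- transfer of MemLp and integrals through Θ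
  have hJ1mem : MemLp (fun q => f₁ (Θ q)) 2 M := h₁.comp_measurePreserving hΘ
  have hJ2mem : MemLp (fun q => f₂ (Θ q)) 2 M := h₂.comp_measurePreserving hΘ
  have hJint : Integrable (fun q => f₁ (Θ q) * f₂ (Θ q)) M := aux_integrable_mul hJ1mem hJ2mem
  have hJ1int : Integrable (fun q => f₁ (Θ q)) M := hJ1mem.integrable one_le_two
  have hint_eq : ∫ p, f₁ p * f₂ p ∂P = ∫ q, f₁ (Θ q) * f₂ (Θ q) ∂M := by
    rw [← hΘ.map_eq]
    exact integral_map hΘm.aemeasurable (hf₁m.mul hf₂m).aestronglyMeasurable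
  have hint1_eq : ∫ p, f₁ p ∂P = ∫ q, f₁ (Θ q) ∂M := by
    rw [← hΘ.map_eq]
    exact integral_map hΘm.aemeasurable hf₁m.aestronglyMeasurable
  have hint2_eq : ∫ p, f₂ p ∂P = ∫ q, f₂ (Θ q) ∂M := by
    rw [← hΘ.map_eq]
    exact integral_map hΘm.aemeasurable hf₂m.aestronglyMeasurable
  set g : α × (Fin n' → β) → ℝ := fun p => ∫ t, f₁ (p.1, S.piecewise p.2 t) ∂π with hgdef
  set g₂ : α × (Fin n' → β) → ℝ := fun p => ∫ t, f₂ (p.1, S.piecewise p.2 t) ∂π with hg₂def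
  have hg2g : g₂ = g := by
    funext p
    exact aux_sym ν hn φ hφ hsym e₁ e₂ he₁ he₂ p.1 p.2
  -- pointwise factorization of the inner integral
  have hinner : ∀ p : α × (Fin n' → β), ∫ t, f₁ (Θ (p, t)) * f₂ (Θ (p, t)) ∂π = g p * g₂ p := by
    intro p
    have hdisj : Disjoint ((Finset.univ.image e₁) \ S) ((Finset.univ.image e₂) \ S) := by
      rw [Finset.disjoint_left]
      intro j hj₁ hj₂
      have h1 := Finset.mem_sdiff.1 hj₁
      have h2 := Finset.mem_sdiff.1 hj₂
      exact h1.2 (Finset.mem_inter.2 ⟨h1.1, h2.1⟩)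
    have hFm : Measurable (fun t => f₁ (p.1, S.piecewise p.2 t)) := by
      apply hf₁m.comp
      exact measurable_const.prodMk (hpwm.comp (measurable_const.prodMk measurable_id))
    have hGm : Measurable (fun t => f₂ (p.1, S.piecewise p.2 t)) := by
      apply hf₂m.comp
      exact measurable_const.prodMk (hpwm.comp (measurable_const.prodMk measurable_id))
    have := aux_factor ν ((Finset.univ.image e₁) \ S) ((Finset.univ.image e₂) \ S) hdisj
      (fun t => f₁ (p.1, S.piecewise p.2 t)) (fun t => f₂ (p.1, S.piecewise p.2 t)) hFm hGm
      (by
        intro t t' ht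
        simp only [hf₁def]
        congr 1
        refine congrArg (Prod.mk p.1) ?_
        funext i
        by_cases h : e₁ i ∈ S
        · simp [Finset.piecewise, h]
        · have : e₁ i ∈ (Finset.univ.image e₁) \ S := Finset.mem_sdiff.2
            ⟨Finset.mem_image.2 ⟨i, Finset.mem_univ _, rfl⟩, h⟩
          simp [Finset.piecewise, h, ht _ this])
      (by
        intro t t' ht
        simp only [hf₂def]
        congr 1
        refine congrArg (Prod.mk p.1) ?_
        funext i
        by_cases h : e₂ i ∈ S
        · simp [Finset.piecewise, h]
        · have : e₂ i ∈ (Finset.univ.image e₂) \ S := Finset.mem_sdiff.2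
            ⟨Finset.mem_image.2 ⟨i, Finset.mem_univ _, rfl⟩, h⟩
          simp [Finset.piecewise, h, ht _ this])
    exact this
  have hfub : ∫ q, f₁ (Θ q) * f₂ (Θ q) ∂M
      = ∫ p, (∫ t, f₁ (Θ (p, t)) * f₂ (Θ (p, t)) ∂π) ∂P := integral_prod _ hJint
  have hfub1 : ∫ q, f₁ (Θ q) ∂M = ∫ p, (∫ t, f₁ (Θ (p, t)) ∂π) ∂P := integral_prod _ hJ1int
  have hg_eq : (fun p => ∫ t, f₁ (Θ (p, t)) ∂π) = g := rfl
  have hgg_eq : (fun p => ∫ t, f₁ (Θ (p, t)) * f₂ (Θ (p, t)) ∂π) = fun p => g p * g p := by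
    funext p
    rw [hinner p, hg2g]
  -- integrability of g and g * g
  have hg_int : Integrable g P := by
    have := hJ1int.integral_prod_left
    rwa [hg_eq] at this
  have hgg_int : Integrable (fun p => g p * g p) P := by
    have := hJint.integral_prod_left
    rwa [hgg_eq] at this
  -- final variance argument
  set a : ℝ := ∫ p, g p ∂P with hadef
  have ha1 : ∫ p, f₁ p ∂P = a := by
    rw [hint1_eq, hfub1]
    try rw [hg_eq]
    try exact hadef.symm
  have ha2 : ∫ p, f₂ p ∂P = a := by
    have hJ2int : Integrable (fun q => f₂ (Θ q)) M := hJ2mem.integrable one_le_two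
    have hfub2 : ∫ q, f₂ (Θ q) ∂M = ∫ p, (∫ t, f₂ (Θ (p, t)) ∂π) ∂P := integral_prod _ hJ2int
    have hg2_eq : (fun p => ∫ t, f₂ (Θ (p, t)) ∂π) = g₂ := rfl
    rw [hint2_eq, hfub2]
    try rw [hg2_eq]
    try rw [hg2g]
    try exact hadef.symm
  have hprod_eq : ∫ p, f₁ p * f₂ p ∂P = ∫ p, g p * g p ∂P := by
    rw [hint_eq, hfub, hgg_eq]
  have hvar : 0 ≤ ∫ p, (g p - a)^2 ∂P := integral_nonneg fun p => sq_nonneg _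
  have i1 : Integrable (fun p => g p * g p - 2 * a * g p) P :=
    hgg_int.sub (hg_int.const_mul (2 * a))
  have hexp : ∫ p, (g p - a)^2 ∂P = ∫ p, g p * g p ∂P - a * a := by
    have h0 : (fun p => (g p - a)^2) = fun p => (g p * g p - 2 * a * g p) + a^2 := by
      funext p; ring
    rw [h0, integral_add i1 (integrable_const _),
      integral_sub hgg_int (hg_int.const_mul (2 * a)), integral_const_mul, integral_const,
      probReal_univ, ← hadef]
    simp
    ring
  rw [ha1, ha2, hprod_eq]
  nlinarith [hvar, hexp]


/-- Symmetrisation from `n` to `n′` dimensions: for `U` and i.i.d. `V₁,…,V_{n′}`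
independent of `U`, and `φ` symmetric in its last `n` arguments with
`W = φ(U, V₁,…,V_n)` square-integrable, the symmetrised statistic
`φ′ = (1/C(n′,n)) ∑_{L} φ(U, V_{l₁},…,V_{l_n})` (sum over `n`-element subsets
`L = {l₁<⋯<l_n}` of `{1,…,n′}`) satisfies
`(1/C(n′,n))·Var(W) ≤ Var(φ′) ≤ Var(W)`, where `Var(W) = E(W²) − (E W)²`. -/
theorem stmt8 {Ω α β : Type*} [MeasurableSpace Ω] [MeasurableSpace α] [MeasurableSpace β]
    (μ : Measure Ω) [IsProbabilityMeasure μ]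
    (n n' : ℕ) (hn : 0 < n) (hnn' : n ≤ n')
    (U : Ω → α) (hU : Measurable U)
    (V : Fin n' → Ω → β) (hV : ∀ i, Measurable (V i))
    (hViid : iIndepFun V μ)
    (hVid : ∀ i j, IdentDistrib (V i) (V j) μ μ)
    (hUV : IndepFun U (fun ω i => V i ω) μ)
    (φ : α × (Fin n → β) → ℝ) (hφ : Measurable φ)
    (hsym : ∀ (σ : Equiv.Perm (Fin n)) (u : α) (v : Fin n → β), φ (u, v ∘ σ) = φ (u, v))
    (W : Ω → ℝ) (hW : W = fun ω => φ (U ω, fun i => V (Fin.castLE hnn' i) ω))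
    (hW2 : MemLp W 2 μ)
    (φ' : Ω → ℝ)
    (hφ' : φ' = fun ω => (n'.choose n : ℝ)⁻¹ *
      ∑ L ∈ (Finset.powersetCard n (Finset.univ : Finset (Fin n'))).attach,
        φ (U ω, fun i => V (L.1.orderEmbOfFin (Finset.mem_powersetCard.1 L.2).2 i) ω)) :
    ((n'.choose n : ℝ)⁻¹ * (∫ ω, W ω ^ 2 ∂μ - (∫ ω, W ω ∂μ) ^ 2) ≤
      ∫ ω, φ' ω ^ 2 ∂μ - (∫ ω, φ' ω ∂μ) ^ 2) ∧
    (∫ ω, φ' ω ^ 2 ∂μ - (∫ ω, φ' ω ∂μ) ^ 2 ≤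
      ∫ ω, W ω ^ 2 ∂μ - (∫ ω, W ω ∂μ) ^ 2) := by
  classical
  -- basic measures
  have hn' : 0 < n' := hn.trans_le hnn'
  set i0 : Fin n' := ⟨0, hn'⟩ with hi0def
  set ν : Measure β := μ.map (V i0) with hνdef
  haveI hνP : IsProbabilityMeasure ν := Measure.isProbabilityMeasure_map (hV i0).aemeasurable
  set κ0 : Measure α := μ.map U with hκ0def
  haveI hκ0P : IsProbabilityMeasure κ0 := Measure.isProbabilityMeasure_map hU.aemeasurable
  set Vv : Ω → Fin n' → β := fun ω i => V i ω with hVvdef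
  have hVv : Measurable Vv := measurable_pi_lambda _ hV
  -- joint law of the V's
  have hmapVv : μ.map Vv = Measure.pi (fun _ : Fin n' => ν) := by
    refine (Measure.pi_eq fun s hs => ?_).symm
    rw [Measure.map_apply hVv (MeasurableSet.univ_pi hs)]
    have hpre : Vv ⁻¹' (Set.univ.pi s) = ⋂ i ∈ (Finset.univ : Finset (Fin n')), V i ⁻¹' s i := by
      ext ω
      simp [Set.mem_pi, hVvdef]
    rw [hpre, hViid.measure_inter_preimage_eq_mul Finset.univ (fun i _ => hs i)]
    refine Finset.prod_congr rfl fun i _ => ?_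
    rw [← Measure.map_apply (hV i) (hs i), (hVid i i0).map_eq]
  set T : Ω → α × (Fin n' → β) := fun ω => (U ω, Vv ω) with hTdef
  have hT : Measurable T := hU.prodMk hVv
  have hlaw : μ.map T = κ0.prod (Measure.pi fun _ : Fin n' => ν) := by
    rw [hTdef]
    rw [(indepFun_iff_map_prod_eq_prod_map_map hU.aemeasurable hVv.aemeasurable).mp hUV, hmapVv]
  -- transfer of integrals
  have transfer : ∀ G : α × (Fin n' → β) → ℝ, Measurable G →
      ∫ ω, G (T ω) ∂μ = ∫ p, G p ∂(κ0.prod (Measure.pi fun _ : Fin n' => ν)) := by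
    intro G hG
    rw [← hlaw]
    exact (integral_map hT.aemeasurable hG.aestronglyMeasurable).symm
  -- the family of functions
  set fe : (Fin n → Fin n') → (α × (Fin n' → β) → ℝ) :=
    fun e p => φ (p.1, fun i => p.2 (e i)) with hfedef
  have hfem : ∀ e, Measurable (fe e) := by
    intro e
    apply hφ.comp
    exact measurable_fst.prodMk (measurable_pi_lambda _ fun i =>
      (measurable_pi_apply _).comp measurable_snd)
  have hmp : ∀ e : Fin n → Fin n', Function.Injective e →
      MeasurePreserving (fun p : α × (Fin n' → β) => (p.1, fun i => p.2 (e i)))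
        (κ0.prod (Measure.pi fun _ : Fin n' => ν)) (κ0.prod (Measure.pi fun _ : Fin n => ν)) := by
    intro e he
    have hg : MeasurePreserving (fun (v : Fin n' → β) (i : Fin n) => v (e i))
        (Measure.pi fun _ : Fin n' => ν) (Measure.pi fun _ : Fin n => ν) :=
      ⟨measurable_pi_lambda _ fun i => measurable_pi_apply _, aux_pi_map_comp ν e he⟩
    exact (MeasurePreserving.id κ0).prod hg
  set e₀ : Fin n → Fin n' := fun i => Fin.castLE hnn' i with he₀def
  have he₀ : Function.Injective e₀ := fun a b h => by
    have := Fin.castLE_injective hnn' h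
    exact this
  have hfe0mem : MemLp (fe e₀) 2 (κ0.prod (Measure.pi fun _ : Fin n' => ν)) := by
    rw [← hlaw]
    refine (memLp_map_measure_iff ?_ hT.aemeasurable).mpr ?_
    · rw [hlaw]; exact (hfem e₀).aestronglyMeasurable
    · have hfun : fe e₀ ∘ T = W := by rw [hW]; rfl
      exact hfun ▸ hW2
  have hφQ : MemLp φ 2 (κ0.prod (Measure.pi fun _ : Fin n => ν)) := by
    rw [← (hmp e₀ he₀).map_eq]
    refine (memLp_map_measure_iff ?_ (hmp e₀ he₀).measurable.aemeasurable).mpr hfe0mem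
    rw [(hmp e₀ he₀).map_eq]
    exact hφ.aestronglyMeasurable
  have hmem : ∀ e : Fin n → Fin n', Function.Injective e →
      MemLp (fe e) 2 (κ0.prod (Measure.pi fun _ : Fin n' => ν)) := by
    intro e he
    refine (memLp_map_measure_iff ?_ (hmp e he).measurable.aemeasurable).mp ?_
    · rw [(hmp e he).map_eq]; exact hφ.aestronglyMeasurable
    · rw [(hmp e he).map_eq]; exact hφQ
  set m : ℝ := ∫ q, φ q ∂(κ0.prod (Measure.pi fun _ : Fin n => ν)) with hmdef
  set M2 : ℝ := ∫ q, φ q * φ q ∂(κ0.prod (Measure.pi fun _ : Fin n => ν)) with hM2def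
  have hintm : ∀ e : Fin n → Fin n', Function.Injective e →
      ∫ p, fe e p ∂(κ0.prod (Measure.pi fun _ : Fin n' => ν)) = m := by
    intro e he
    rw [hmdef, ← (hmp e he).map_eq]
    exact (integral_map (hmp e he).measurable.aemeasurable hφ.aestronglyMeasurable).symm
  have hint2 : ∀ e : Fin n → Fin n', Function.Injective e →
      ∫ p, fe e p * fe e p ∂(κ0.prod (Measure.pi fun _ : Fin n' => ν)) = M2 := by
    intro e he
    rw [hM2def, ← (hmp e he).map_eq]
    exact (integral_map (hmp e he).measurable.aemeasurable
      (hφ.mul hφ).aestronglyMeasurable).symm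
  have hX : ∀ e₁ e₂ : Fin n → Fin n', Function.Injective e₁ → Function.Injective e₂ →
      m * m ≤ ∫ p, fe e₁ p * fe e₂ p ∂(κ0.prod (Measure.pi fun _ : Fin n' => ν)) := by
    intro e₁ e₂ he₁ he₂
    have := aux_X κ0 ν hn φ hφ hsym e₁ e₂ he₁ he₂ (hmem e₁ he₁) (hmem e₂ he₂)
    rwa [hintm e₁ he₁, hintm e₂ he₂] at this
  have hUB : ∀ e₁ e₂ : Fin n → Fin n', Function.Injective e₁ → Function.Injective e₂ →
      ∫ p, fe e₁ p * fe e₂ p ∂(κ0.prod (Measure.pi fun _ : Fin n' => ν)) ≤ M2 := by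
    intro e₁ e₂ he₁ he₂
    have hb : ∀ p, fe e₁ p * fe e₂ p ≤
        (fe e₁ p * fe e₁ p) / 2 + (fe e₂ p * fe e₂ p) / 2 := by
      intro p; nlinarith [sq_nonneg (fe e₁ p - fe e₂ p)]
    have hI1 := aux_integrable_mul (hmem e₁ he₁) (hmem e₁ he₁)
    have hI2 := aux_integrable_mul (hmem e₂ he₂) (hmem e₂ he₂)
    have hI12 := aux_integrable_mul (hmem e₁ he₁) (hmem e₂ he₂)
    calc ∫ p, fe e₁ p * fe e₂ p ∂(κ0.prod (Measure.pi fun _ : Fin n' => ν))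
        ≤ ∫ p, ((fe e₁ p * fe e₁ p) / 2 + (fe e₂ p * fe e₂ p) / 2)
            ∂(κ0.prod (Measure.pi fun _ : Fin n' => ν)) := by
          refine integral_mono hI12 ?_ hb
          exact (hI1.div_const 2).add (hI2.div_const 2)
      _ = M2 := by
          rw [integral_add (hI1.div_const 2) (hI2.div_const 2), integral_div, integral_div,
            hint2 e₁ he₁, hint2 e₂ he₂]
          ring
  -- summation machinery
  set A := (Finset.powersetCard n (Finset.univ : Finset (Fin n'))).attach with hAdef
  set N := n'.choose n with hNdef
  have hNpos : 0 < N := Nat.choose_pos hnn'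
  have hNne : (N:ℝ) ≠ 0 := Nat.cast_ne_zero.2 hNpos.ne'
  have hNR : (0:ℝ) < N := Nat.cast_pos.2 hNpos
  have hcardA : A.card = N := by
    rw [hAdef, Finset.card_attach, Finset.card_powersetCard, Finset.card_univ, Fintype.card_fin]
  set eL : {x // x ∈ Finset.powersetCard n (Finset.univ : Finset (Fin n'))} → (Fin n → Fin n') :=
    fun L => fun i => L.1.orderEmbOfFin (Finset.mem_powersetCard.1 L.2).2 i with heLdef
  have heL : ∀ L, Function.Injective (eL L) := fun L => (Finset.orderEmbOfFin _ _).injective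
  set Φ : α × (Fin n' → β) → ℝ :=
    fun p => (N:ℝ)⁻¹ * ∑ L ∈ A, fe (eL L) p with hΦdef
  have hΦm : Measurable Φ :=
    (Finset.measurable_sum A fun L _ => hfem (eL L)).const_mul _
  -- transfers of the four goal integrals
  have hIW1 : ∫ ω, W ω ∂μ = m := by
    rw [hW]
    have h2 := transfer (fe e₀) (hfem e₀)
    have h1 : ∫ ω, φ (U ω, fun i => V (Fin.castLE hnn' i) ω) ∂μ = ∫ ω, fe e₀ (T ω) ∂μ := rfl
    rw [h1, h2, hintm e₀ he₀]
  have hIW2 : ∫ ω, W ω ^ 2 ∂μ = M2 := by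
    rw [hW]
    have h2 := transfer (fun p => fe e₀ p * fe e₀ p) ((hfem e₀).mul (hfem e₀))
    have h1 : ∫ ω, (φ (U ω, fun i => V (Fin.castLE hnn' i) ω)) ^ 2 ∂μ
        = ∫ ω, (fun p => fe e₀ p * fe e₀ p) (T ω) ∂μ :=
      integral_congr_ae (Filter.Eventually.of_forall fun ω => pow_two _)
    rw [h1, h2, hint2 e₀ he₀]
  have hIΦ1 : ∫ ω, φ' ω ∂μ = m := by
    rw [hφ']
    have h2 := transfer Φ hΦm
    have h1 : ∫ ω, ((n'.choose n : ℝ)⁻¹ *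
        ∑ L ∈ (Finset.powersetCard n (Finset.univ : Finset (Fin n'))).attach,
          φ (U ω, fun i => V (L.1.orderEmbOfFin (Finset.mem_powersetCard.1 L.2).2 i) ω)) ∂μ
        = ∫ ω, Φ (T ω) ∂μ := rfl
    rw [h1, h2]
    rw [hΦdef]
    show ∫ p, ((N:ℝ)⁻¹ * ∑ L ∈ A, fe (eL L) p)
        ∂(κ0.prod (Measure.pi fun _ : Fin n' => ν)) = m
    rw [integral_const_mul,
      integral_finset_sum A (fun L _ => (hmem _ (heL L)).integrable one_le_two),
      Finset.sum_congr rfl (fun L _ => hintm _ (heL L)), Finset.sum_const, hcardA,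
      nsmul_eq_mul]
    field_simp
  have hintLL : ∀ L L', Integrable (fun p => fe (eL L) p * fe (eL L') p)
      (κ0.prod (Measure.pi fun _ : Fin n' => ν)) :=
    fun L L' => aux_integrable_mul (hmem _ (heL L)) (hmem _ (heL L'))
  have hIΦ2 : ∫ ω, φ' ω ^ 2 ∂μ = (N:ℝ)⁻¹ * (N:ℝ)⁻¹ *
      ∑ L ∈ A, ∑ L' ∈ A, ∫ p, fe (eL L) p * fe (eL L') p
        ∂(κ0.prod (Measure.pi fun _ : Fin n' => ν)) := by
    rw [hφ']
    have h2 := transfer (fun p => Φ p * Φ p) (hΦm.mul hΦm)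
    have h1 : ∫ ω, ((n'.choose n : ℝ)⁻¹ *
        ∑ L ∈ (Finset.powersetCard n (Finset.univ : Finset (Fin n'))).attach,
          φ (U ω, fun i => V (L.1.orderEmbOfFin (Finset.mem_powersetCard.1 L.2).2 i) ω)) ^ 2 ∂μ
        = ∫ ω, (fun p => Φ p * Φ p) (T ω) ∂μ :=
      integral_congr_ae (Filter.Eventually.of_forall fun ω => pow_two _)
    rw [h1, h2]
    have h3 : ∀ p : α × (Fin n' → β), Φ p * Φ p
        = (N:ℝ)⁻¹ * (N:ℝ)⁻¹ * ∑ L ∈ A, ∑ L' ∈ A, fe (eL L) p * fe (eL L') p := by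
      intro p
      rw [hΦdef]
      show ((N:ℝ)⁻¹ * ∑ L ∈ A, fe (eL L) p) * ((N:ℝ)⁻¹ * ∑ L ∈ A, fe (eL L) p) = _
      rw [mul_mul_mul_comm, Finset.sum_mul_sum]
    calc ∫ p, Φ p * Φ p ∂(κ0.prod (Measure.pi fun _ : Fin n' => ν))
        = ∫ p, ((N:ℝ)⁻¹ * (N:ℝ)⁻¹ * ∑ L ∈ A, ∑ L' ∈ A, fe (eL L) p * fe (eL L') p)
            ∂(κ0.prod (Measure.pi fun _ : Fin n' => ν)) :=
          integral_congr_ae (Filter.Eventually.of_forall h3)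
      _ = (N:ℝ)⁻¹ * (N:ℝ)⁻¹ * ∫ p, (∑ L ∈ A, ∑ L' ∈ A, fe (eL L) p * fe (eL L') p)
            ∂(κ0.prod (Measure.pi fun _ : Fin n' => ν)) := integral_const_mul _ _
      _ = (N:ℝ)⁻¹ * (N:ℝ)⁻¹ * ∑ L ∈ A, ∑ L' ∈ A, ∫ p, fe (eL L) p * fe (eL L') p
            ∂(κ0.prod (Measure.pi fun _ : Fin n' => ν)) := by
          congr 1
          rw [integral_finset_sum A (fun L _ => integrable_finset_sum A (fun L' _ => hintLL L L'))]
          exact Finset.sum_congr rfl fun L _ => integral_finset_sum A (fun L' _ => hintLL L L')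
  -- bounds on the double sum
  have hstep : ∀ L ∈ A, M2 + ((N:ℝ) - 1) * (m*m) ≤ ∑ L' ∈ A, ∫ p, fe (eL L) p * fe (eL L') p
      ∂(κ0.prod (Measure.pi fun _ : Fin n' => ν)) := by
    intro L hL
    have h1 : ∑ L' ∈ A, ((m*m) + (if L' = L then M2 - m*m else 0))
        ≤ ∑ L' ∈ A, ∫ p, fe (eL L) p * fe (eL L') p
          ∂(κ0.prod (Measure.pi fun _ : Fin n' => ν)) := by
      refine Finset.sum_le_sum fun L' hL' => ?_
      by_cases h : L' = L
      · subst h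
        have heq := hint2 _ (heL L')
        simp only [eq_self_iff_true, if_true]
        linarith [le_of_eq heq.symm]
      · simp only [if_neg h, add_zero]
        exact hX _ _ (heL L) (heL L')
    have h2 : ∑ L' ∈ A, ((m*m) + (if L' = L then M2 - m*m else 0))
        = (N:ℝ)*(m*m) + (M2 - m*m) := by
      rw [Finset.sum_add_distrib, Finset.sum_const, hcardA, nsmul_eq_mul,
        Finset.sum_ite_eq' A L (fun _ => M2 - m*m), if_pos hL]
    rw [h2] at h1
    linarith
  have hlow : (N:ℝ) * (M2 + ((N:ℝ)-1)*(m*m)) ≤ ∑ L ∈ A, ∑ L' ∈ A,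
      ∫ p, fe (eL L) p * fe (eL L') p ∂(κ0.prod (Measure.pi fun _ : Fin n' => ν)) := by
    calc (N:ℝ) * (M2 + ((N:ℝ)-1)*(m*m))
        = ∑ _L ∈ A, (M2 + ((N:ℝ)-1)*(m*m)) := by
          rw [Finset.sum_const, hcardA, nsmul_eq_mul]
      _ ≤ _ := Finset.sum_le_sum hstep
  have hhigh : ∑ L ∈ A, ∑ L' ∈ A, ∫ p, fe (eL L) p * fe (eL L') p
      ∂(κ0.prod (Measure.pi fun _ : Fin n' => ν)) ≤ (N:ℝ) * ((N:ℝ) * M2) := by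
    calc ∑ L ∈ A, ∑ L' ∈ A, ∫ p, fe (eL L) p * fe (eL L') p
        ∂(κ0.prod (Measure.pi fun _ : Fin n' => ν))
        ≤ ∑ _L ∈ A, ((N:ℝ) * M2) := by
          refine Finset.sum_le_sum fun L _ => ?_
          calc ∑ L' ∈ A, ∫ p, fe (eL L) p * fe (eL L') p
              ∂(κ0.prod (Measure.pi fun _ : Fin n' => ν))
              ≤ ∑ _L' ∈ A, M2 := Finset.sum_le_sum fun L' _ => hUB _ _ (heL L) (heL L')
            _ = (N:ℝ) * M2 := by rw [Finset.sum_const, hcardA, nsmul_eq_mul]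
      _ = (N:ℝ) * ((N:ℝ) * M2) := by rw [Finset.sum_const, hcardA, nsmul_eq_mul]
  -- finish
  rw [hIW1, hIW2, hIΦ1, hIΦ2]
  have hm2 : m ^ 2 = m * m := pow_two m
  set SS : ℝ := ∑ L ∈ A, ∑ L' ∈ A, ∫ p, fe (eL L) p * fe (eL L') p
    ∂(κ0.prod (Measure.pi fun _ : Fin n' => ν)) with hSSdef
  have hinv : (N:ℝ)⁻¹ * (N:ℝ) = 1 := inv_mul_cancel₀ hNne
  have hinvpos : (0:ℝ) < (N:ℝ)⁻¹ := inv_pos.2 hNR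
  constructor
  · have h3 : (N:ℝ)⁻¹ * (N:ℝ)⁻¹ * ((N:ℝ) * (M2 + ((N:ℝ)-1)*(m*m)))
        ≤ (N:ℝ)⁻¹ * (N:ℝ)⁻¹ * SS :=
      mul_le_mul_of_nonneg_left hlow (by positivity)
    have h4 : (N:ℝ)⁻¹ * (N:ℝ)⁻¹ * ((N:ℝ) * (M2 + ((N:ℝ)-1)*(m*m)))
        = (N:ℝ)⁻¹ * (M2 - m*m) + m*m := by
      field_simp
      ring
    rw [hm2]
    linarith
  · have h3 : (N:ℝ)⁻¹ * (N:ℝ)⁻¹ * SS ≤ (N:ℝ)⁻¹ * (N:ℝ)⁻¹ * ((N:ℝ) * ((N:ℝ) * M2)) :=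
      mul_le_mul_of_nonneg_left hhigh (by positivity)
    have h4 : (N:ℝ)⁻¹ * (N:ℝ)⁻¹ * ((N:ℝ) * ((N:ℝ) * M2)) = M2 := by
      field_simp
    rw [hm2]
    linarith
end

section
/- Let N ≥ 2 be an integer and let X be a real random variable with E(X⁴) < ∞, E(X) = 0 and E(X²) > 0. Let Y₁, …, Y_N be i.i.d. random variables each distributed as X, and set M₁ = (1/N) Σ_{i=1}^{N} Y_i and M₂ = (1/N) Σ_{i=1}^{N} Y_i². Then E(M₂²) < (N/(N−1))² · E( (M₂ − M₁²)² ). -/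
open MeasureTheory ProbabilityTheory

/-- For `N ≥ 2`, `X` with `E(X⁴) < ∞`, `E X = 0`, `E(X²) > 0`, and i.i.d.
`Y₁,…,Y_N` distributed as `X`, setting `M₁ = (1/N)∑ Yᵢ` and `M₂ = (1/N)∑ Yᵢ²`,
it holds that `E(M₂²) < (N/(N−1))² · E((M₂ − M₁²)²)`. -/
theorem stmt9 {Ω : Type*} [MeasurableSpace Ω]
    (μ : Measure Ω) [IsProbabilityMeasure μ]
    (N : ℕ) (hN : 2 ≤ N)
    (X : Ω → ℝ) (hX : Measurable X) (hX4 : MemLp X 4 μ)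
    (hXmean : ∫ ω, X ω ∂μ = 0) (hXsq : 0 < ∫ ω, (X ω) ^ 2 ∂μ)
    (Y : Fin N → Ω → ℝ) (hY : ∀ i, Measurable (Y i))
    (hYindep : iIndepFun Y μ)
    (hYdist : ∀ i, IdentDistrib (Y i) X μ μ) :
    ∫ ω, ((N : ℝ)⁻¹ * ∑ i, (Y i ω) ^ 2) ^ 2 ∂μ <
      ((N : ℝ) / ((N : ℝ) - 1)) ^ 2 *
        ∫ ω, ((N : ℝ)⁻¹ * ∑ i, (Y i ω) ^ 2 -
          ((N : ℝ)⁻¹ * ∑ i, Y i ω) ^ 2) ^ 2 ∂μ := by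
  classical
  -- basic facts about `N`
  have hN1 : (1:ℝ) < (N:ℝ) := by exact_mod_cast hN.trans_lt' one_lt_two
  have hNne : (N:ℝ) ≠ 0 := by positivity
  have hN1ne : (N:ℝ) - 1 ≠ 0 := by linarith
  -- ℒp facts
  have hY4 : ∀ i, MemLp (Y i) 4 μ := fun i => (hYdist i).symm.memLp_snd hX4
  have hY2 : ∀ i, MemLp (Y i) 2 μ := fun i => (hY4 i).mono_exponent (by norm_num)
  have hYint : ∀ i, Integrable (Y i) μ := fun i => (hY2 i).integrable (by norm_num)
  have hmul2 : ∀ i j, MemLp (fun ω => Y i ω * Y j ω) 2 μ := by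
    intro i j
    have h := ((hY4 j).smul (hY4 i) (p := 4) (q := 4) (r := 2) (hpqr := ⟨by
      rw [← two_mul, show (4:ENNReal) = 2*2 by norm_num, ENNReal.mul_inv (by simp) (by simp),
        ← mul_assoc, ENNReal.mul_inv_cancel (by simp) (by simp), one_mul]⟩) :
      MemLp (Y i • Y j) 2 μ)
    exact h
  have hint22 : ∀ (f g : Ω → ℝ), MemLp f 2 μ → MemLp g 2 μ →
      Integrable (fun ω => f ω * g ω) μ := by
    intro f g hf hg
    have h := (hg.smul hf (p := 2) (q := 2) (r := 1) (hpqr := ⟨by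
      rw [inv_one]; exact ENNReal.inv_two_add_inv_two⟩) : MemLp (f • g) 1 μ)
    exact memLp_one_iff_integrable.mp h
  have hint4 : ∀ a b c d, Integrable (fun ω => Y a ω * Y b ω * Y c ω * Y d ω) μ := by
    intro a b c d
    have := hint22 _ _ (hmul2 a b) (hmul2 c d)
    simpa [mul_assoc] using this
  have hint3 : ∀ a b c, Integrable (fun ω => Y a ω * Y b ω * Y c ω) μ := by
    intro a b c
    have := hint22 _ _ (hmul2 a b) (hY2 c)
    simpa [mul_assoc] using this
  have hsqL2 : ∀ i, MemLp (fun ω => (Y i ω)^2) 2 μ := by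
    intro i; simpa [sq] using hmul2 i i
  -- moments
  have hEY : ∀ i, ∫ ω, Y i ω ∂μ = 0 := fun i => by
    rw [(hYdist i).integral_eq, hXmean]
  have hEY2 : ∀ i, ∫ ω, (Y i ω) ^ 2 ∂μ = ∫ ω, (X ω)^2 ∂μ := fun i =>
    ((hYdist i).comp (measurable_id.pow_const 2)).integral_eq
  -- vanishing fourth-moment cross terms
  have zero4 : ∀ a b c l : Fin N, a ≠ l → b ≠ l → c ≠ l →
      ∫ ω, Y a ω * Y b ω * Y c ω * Y l ω ∂μ = 0 := by
    intro a b c l hal hbl hcl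
    have hdisj : Disjoint ({a, b, c} : Finset (Fin N)) {l} := by
      simp [Finset.disjoint_left, hal, hbl, hcl]
    have h := hYindep.indepFun_finset {a, b, c} {l} hdisj hY
    have ha : a ∈ ({a, b, c} : Finset (Fin N)) := by simp
    have hb : b ∈ ({a, b, c} : Finset (Fin N)) := by simp
    have hc : c ∈ ({a, b, c} : Finset (Fin N)) := by simp
    have hl : l ∈ ({l} : Finset (Fin N)) := by simp
    have hind : IndepFun (fun ω => Y a ω * Y b ω * Y c ω) (Y l) μ := by
      have := h.comp (φ := fun v : (({a,b,c} : Finset (Fin N)) → ℝ) =>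
          v ⟨a, ha⟩ * v ⟨b, hb⟩ * v ⟨c, hc⟩)
        (ψ := fun v : (({l} : Finset (Fin N)) → ℝ) => v ⟨l, hl⟩)
        (by fun_prop) (measurable_pi_apply _ :
          Measurable fun v : (({l} : Finset (Fin N)) → ℝ) => v ⟨l, hl⟩)
      exact this
    have := hind.integral_mul_eq_mul_integral (hint3 a b c).1 (hYint l).1
    calc ∫ ω, Y a ω * Y b ω * Y c ω * Y l ω ∂μ
        = (∫ ω, Y a ω * Y b ω * Y c ω ∂μ) * ∫ ω, Y l ω ∂μ := this
      _ = 0 := by rw [hEY l, mul_zero]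
  -- the key mixed-product vanishing lemma
  have zmix : ∀ a b i j : Fin N, i ≠ j → ((j ≠ a ∧ j ≠ b) ∨ (i ≠ a ∧ i ≠ b)) →
      ∫ ω, (Y a ω * Y b ω) * (Y i ω * Y j ω) ∂μ = 0 := by
    rintro a b i j hij (⟨hja, hjb⟩ | ⟨hia, hib⟩)
    · calc ∫ ω, (Y a ω * Y b ω) * (Y i ω * Y j ω) ∂μ
          = ∫ ω, Y a ω * Y b ω * Y i ω * Y j ω ∂μ :=
            integral_congr_ae (Filter.Eventually.of_forall fun ω => by ring)
        _ = 0 := zero4 a b i j hja.symm hjb.symm hij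
    · calc ∫ ω, (Y a ω * Y b ω) * (Y i ω * Y j ω) ∂μ
          = ∫ ω, Y a ω * Y b ω * Y j ω * Y i ω ∂μ :=
            integral_congr_ae (Filter.Eventually.of_forall fun ω => by ring)
        _ = 0 := zero4 a b j i hia.symm hib.symm hij.symm
  -- second moments of products of squares
  have hsq2 : ∀ i j : Fin N, i ≠ j →
      ∫ ω, (Y i ω * Y j ω) * (Y i ω * Y j ω) ∂μ = (∫ ω, (X ω)^2 ∂μ) * ∫ ω, (X ω)^2 ∂μ := by
    intro i j hij
    have hind : IndepFun (fun ω => (Y i ω)^2) (fun ω => (Y j ω)^2) μ :=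
      (hYindep.indepFun hij).comp (measurable_id.pow_const 2) (measurable_id.pow_const 2)
    have hi2 : Integrable (fun ω => (Y i ω)^2) μ := (hsqL2 i).integrable (by norm_num)
    have hj2 : Integrable (fun ω => (Y j ω)^2) μ := (hsqL2 j).integrable (by norm_num)
    have h := hind.integral_mul_eq_mul_integral hi2.1 hj2.1
    calc ∫ ω, (Y i ω * Y j ω) * (Y i ω * Y j ω) ∂μ
        = ∫ ω, (Y i ω)^2 * (Y j ω)^2 ∂μ :=
          integral_congr_ae (Filter.Eventually.of_forall fun ω => by ring)
      _ = (∫ ω, (Y i ω)^2 ∂μ) * ∫ ω, (Y j ω)^2 ∂μ := h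
      _ = (∫ ω, (X ω)^2 ∂μ) * ∫ ω, (X ω)^2 ∂μ := by rw [hEY2 i, hEY2 j]
  -- diagonal sum lemma
  have hdiagsum : ∀ (f : Fin N × Fin N → ℝ),
      ∑ p ∈ (Finset.univ : Finset (Fin N)).diag, f p = ∑ i, f (i, i) := by
    intro f
    refine (Finset.sum_bij (fun i _ => (i, i)) ?_ ?_ ?_ ?_).symm
    · simp
    · intro a _ b _ h; exact (Prod.mk.inj h).1
    · rintro ⟨a, b⟩ hp
      simp only [Finset.mem_diag] at hp
      exact ⟨a, by simp, by simp [hp.2]⟩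
    · simp
  -- square of the sum
  have hS2 : ∀ ω, (∑ i, Y i ω)^2 = (∑ i, (Y i ω)^2) +
      ∑ p ∈ (Finset.univ : Finset (Fin N)).offDiag, Y p.1 ω * Y p.2 ω := by
    intro ω
    rw [sq, Finset.sum_mul_sum]
    rw [← Finset.sum_product (f := fun p : Fin N × Fin N => Y p.1 ω * Y p.2 ω)]
    rw [← Finset.diag_union_offDiag (Finset.univ : Finset (Fin N)),
      Finset.sum_union (Finset.disjoint_diag_offDiag _), hdiagsum]
    simp [sq]
  -- abbreviations (purely notational in the proof below)
  -- integrability of the pieces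
  have IntQ2 : Integrable (fun ω => ((∑ i, (Y i ω)^2))^2) μ := by
    have hfun : (fun ω => ((∑ i, (Y i ω)^2))^2)
        = fun ω => ∑ i, ∑ j, (Y i ω)^2 * (Y j ω)^2 := by
      funext ω; rw [sq, Finset.sum_mul_sum]
    rw [hfun]
    exact integrable_finset_sum _ fun i _ =>
      integrable_finset_sum _ fun j _ => hint22 _ _ (hsqL2 i) (hsqL2 j)
  have IntQU : Integrable (fun ω => (∑ i, (Y i ω)^2) *
      ∑ p ∈ (Finset.univ : Finset (Fin N)).offDiag, Y p.1 ω * Y p.2 ω) μ := by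
    have hfun : (fun ω => (∑ i, (Y i ω)^2) *
        ∑ p ∈ (Finset.univ : Finset (Fin N)).offDiag, Y p.1 ω * Y p.2 ω)
        = fun ω => ∑ i, ∑ p ∈ (Finset.univ : Finset (Fin N)).offDiag,
            (Y i ω)^2 * (Y p.1 ω * Y p.2 ω) := by
      funext ω; rw [Finset.sum_mul_sum]
    rw [hfun]
    exact integrable_finset_sum _ fun i _ => integrable_finset_sum _ fun p _ =>
      (hint4 i i p.1 p.2).congr (Filter.Eventually.of_forall fun ω => by ring)
  have IntU2 : Integrable (fun ω =>
      (∑ p ∈ (Finset.univ : Finset (Fin N)).offDiag, Y p.1 ω * Y p.2 ω)^2) μ := by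
    have hfun : (fun ω =>
        (∑ p ∈ (Finset.univ : Finset (Fin N)).offDiag, Y p.1 ω * Y p.2 ω)^2)
        = fun ω => ∑ p ∈ (Finset.univ : Finset (Fin N)).offDiag,
            ∑ q ∈ (Finset.univ : Finset (Fin N)).offDiag,
              (Y p.1 ω * Y p.2 ω) * (Y q.1 ω * Y q.2 ω) := by
      funext ω; rw [sq, Finset.sum_mul_sum]
    rw [hfun]
    exact integrable_finset_sum _ fun p _ => integrable_finset_sum _ fun q _ =>
      (hint4 p.1 p.2 q.1 q.2).congr (Filter.Eventually.of_forall fun ω => by ring)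
  -- the cross term vanishes
  have hQU : ∫ ω, (∑ i, (Y i ω)^2) *
      ∑ p ∈ (Finset.univ : Finset (Fin N)).offDiag, Y p.1 ω * Y p.2 ω ∂μ = 0 := by
    have hfun : ∀ ω, (∑ i, (Y i ω)^2) *
        ∑ p ∈ (Finset.univ : Finset (Fin N)).offDiag, Y p.1 ω * Y p.2 ω
        = ∑ i, ∑ p ∈ (Finset.univ : Finset (Fin N)).offDiag,
            (Y i ω * Y i ω) * (Y p.1 ω * Y p.2 ω) := by
      intro ω; rw [Finset.sum_mul_sum]
      exact Finset.sum_congr rfl fun i _ => Finset.sum_congr rfl fun p _ => by ring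
    rw [integral_congr_ae (Filter.Eventually.of_forall hfun)]
    rw [integral_finset_sum _ fun i _ => integrable_finset_sum _ fun p _ =>
      (hint4 i i p.1 p.2).congr (Filter.Eventually.of_forall fun ω => by ring)]
    refine Finset.sum_eq_zero fun i _ => ?_
    rw [integral_finset_sum _ fun p _ =>
      (hint4 i i p.1 p.2).congr (Filter.Eventually.of_forall fun ω => by ring)]
    refine Finset.sum_eq_zero fun p hp => ?_
    have hpne : p.1 ≠ p.2 := (Finset.mem_offDiag.mp hp).2.2
    refine zmix i i p.1 p.2 hpne ?_
    by_cases h2 : p.2 = i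
    · exact Or.inr ⟨fun h => hpne (h.trans h2.symm), fun h => hpne (h.trans h2.symm)⟩
    · exact Or.inl ⟨h2, h2⟩
  -- value of the square term
  have hU2 : ∫ ω, (∑ p ∈ (Finset.univ : Finset (Fin N)).offDiag, Y p.1 ω * Y p.2 ω)^2 ∂μ
      = ((Finset.univ : Finset (Fin N)).offDiag.card : ℝ) *
        (2 * ((∫ ω, (X ω)^2 ∂μ) * ∫ ω, (X ω)^2 ∂μ)) := by
    have hfun : ∀ ω, (∑ p ∈ (Finset.univ : Finset (Fin N)).offDiag, Y p.1 ω * Y p.2 ω)^2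
        = ∑ p ∈ (Finset.univ : Finset (Fin N)).offDiag,
            ∑ q ∈ (Finset.univ : Finset (Fin N)).offDiag,
              (Y p.1 ω * Y p.2 ω) * (Y q.1 ω * Y q.2 ω) := by
      intro ω; rw [sq, Finset.sum_mul_sum]
    rw [integral_congr_ae (Filter.Eventually.of_forall hfun)]
    rw [integral_finset_sum _ fun p _ => integrable_finset_sum _ fun q _ =>
      (hint4 p.1 p.2 q.1 q.2).congr (Filter.Eventually.of_forall fun ω => by ring)]
    have hinner : ∀ p ∈ (Finset.univ : Finset (Fin N)).offDiag,
        (∫ ω, ∑ q ∈ (Finset.univ : Finset (Fin N)).offDiag,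
          (Y p.1 ω * Y p.2 ω) * (Y q.1 ω * Y q.2 ω) ∂μ)
        = 2 * ((∫ ω, (X ω)^2 ∂μ) * ∫ ω, (X ω)^2 ∂μ) := by
      intro p hp
      have hpne : p.1 ≠ p.2 := (Finset.mem_offDiag.mp hp).2.2
      rw [integral_finset_sum _ fun q _ =>
        (hint4 p.1 p.2 q.1 q.2).congr (Filter.Eventually.of_forall fun ω => by ring)]
      have hswap_mem : p.swap ∈ (Finset.univ : Finset (Fin N)).offDiag := by
        simp [Finset.mem_offDiag, hpne.symm]
      have hswap_ne : p ≠ p.swap := fun h => hpne (congrArg Prod.fst h)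
      have hsub : ({p, p.swap} : Finset (Fin N × Fin N)) ⊆
          (Finset.univ : Finset (Fin N)).offDiag := by
        intro q hq
        rcases Finset.mem_insert.mp hq with h | h
        · rwa [h]
        · rw [Finset.mem_singleton.mp h]; exact hswap_mem
      have hzero : ∀ q ∈ (Finset.univ : Finset (Fin N)).offDiag,
          q ∉ ({p, p.swap} : Finset (Fin N × Fin N)) →
          ∫ ω, (Y p.1 ω * Y p.2 ω) * (Y q.1 ω * Y q.2 ω) ∂μ = 0 := by
        intro q hq hqnot
        have hqne : q.1 ≠ q.2 := (Finset.mem_offDiag.mp hq).2.2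
        have hqp : q ≠ p := fun h => hqnot (by simp [h])
        have hqswap : q ≠ p.swap := fun h => hqnot (by simp [h])
        refine zmix p.1 p.2 q.1 q.2 hqne ?_
        by_cases h1 : q.2 = p.1
        · refine Or.inr ⟨fun h => hqne (h.trans h1.symm), fun h => ?_⟩
          exact hqswap (Prod.ext h (by simpa using h1))
        · by_cases h2 : q.2 = p.2
          · refine Or.inr ⟨fun h => hqp (Prod.ext h h2), fun h => hqne (h.trans h2.symm)⟩
          · exact Or.inl ⟨h1, h2⟩
      rw [← Finset.sum_subset hsub hzero]
      rw [Finset.sum_pair hswap_ne]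
      have h1 : ∫ ω, (Y p.1 ω * Y p.2 ω) * (Y p.1 ω * Y p.2 ω) ∂μ
          = (∫ ω, (X ω)^2 ∂μ) * ∫ ω, (X ω)^2 ∂μ := hsq2 p.1 p.2 hpne
      have h2 : ∫ ω, (Y p.1 ω * Y p.2 ω) * (Y p.swap.1 ω * Y p.swap.2 ω) ∂μ
          = (∫ ω, (X ω)^2 ∂μ) * ∫ ω, (X ω)^2 ∂μ := by
        have : ∀ ω, (Y p.1 ω * Y p.2 ω) * (Y p.swap.1 ω * Y p.swap.2 ω)
            = (Y p.1 ω * Y p.2 ω) * (Y p.1 ω * Y p.2 ω) := by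
          intro ω; simp only [Prod.fst_swap, Prod.snd_swap]; ring
        rw [integral_congr_ae (Filter.Eventually.of_forall this)]
        exact hsq2 p.1 p.2 hpne
      rw [h1, h2]; ring
    rw [Finset.sum_congr rfl hinner, Finset.sum_const, nsmul_eq_mul]
  -- pointwise algebraic identity
  have halg : ∀ q u : ℝ,
      ((N:ℝ)/((N:ℝ)-1))^2 * ((N:ℝ)⁻¹ * q - ((N:ℝ)⁻¹)^2 * (q + u))^2
        = ((N:ℝ)⁻¹ * q - ((N:ℝ) * ((N:ℝ)-1))⁻¹ * u)^2 := by
    intro q u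
    field_simp
    ring
  have hptwise : ∀ ω, ((N:ℝ)/((N:ℝ)-1))^2 *
      ((N:ℝ)⁻¹ * ∑ i, (Y i ω)^2 - ((N:ℝ)⁻¹ * ∑ i, Y i ω)^2)^2
      = ((N:ℝ)⁻¹ * ∑ i, (Y i ω)^2 - ((N:ℝ) * ((N:ℝ)-1))⁻¹ *
          ∑ p ∈ (Finset.univ : Finset (Fin N)).offDiag, Y p.1 ω * Y p.2 ω)^2 := by
    intro ω
    rw [mul_pow ((N:ℝ)⁻¹), hS2 ω]
    exact halg _ _
  -- putting everything together
  have step1 : ((N:ℝ)/((N:ℝ)-1))^2 * ∫ ω, ((N : ℝ)⁻¹ * ∑ i, (Y i ω) ^ 2 -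
          ((N : ℝ)⁻¹ * ∑ i, Y i ω) ^ 2) ^ 2 ∂μ
      = ∫ ω, ((N:ℝ)⁻¹ * ∑ i, (Y i ω)^2 - ((N:ℝ) * ((N:ℝ)-1))⁻¹ *
          ∑ p ∈ (Finset.univ : Finset (Fin N)).offDiag, Y p.1 ω * Y p.2 ω)^2 ∂μ := by
    rw [← integral_const_mul]
    exact integral_congr_ae (Filter.Eventually.of_forall hptwise)
  have h1 : Integrable (fun ω => ((N:ℝ)⁻¹ * ∑ i, (Y i ω)^2)^2) μ := by
    have := IntQ2.const_mul (((N:ℝ)⁻¹)^2)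
    exact this.congr (Filter.Eventually.of_forall fun ω => by simp [mul_pow])
  have h2 : Integrable (fun ω => (2 * ((N:ℝ) * ((N:ℝ)-1))⁻¹ * (N:ℝ)⁻¹) *
      ((∑ i, (Y i ω)^2) * ∑ p ∈ (Finset.univ : Finset (Fin N)).offDiag,
        Y p.1 ω * Y p.2 ω)) μ := IntQU.const_mul _
  have h3 : Integrable (fun ω => (((N:ℝ) * ((N:ℝ)-1))⁻¹)^2 *
      (∑ p ∈ (Finset.univ : Finset (Fin N)).offDiag, Y p.1 ω * Y p.2 ω)^2) μ :=
    IntU2.const_mul _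
  have step2 : ∫ ω, ((N:ℝ)⁻¹ * ∑ i, (Y i ω)^2 - ((N:ℝ) * ((N:ℝ)-1))⁻¹ *
          ∑ p ∈ (Finset.univ : Finset (Fin N)).offDiag, Y p.1 ω * Y p.2 ω)^2 ∂μ
      = ∫ ω, ((N:ℝ)⁻¹ * ∑ i, (Y i ω)^2)^2 ∂μ
        - (2 * ((N:ℝ) * ((N:ℝ)-1))⁻¹ * (N:ℝ)⁻¹) *
            ∫ ω, (∑ i, (Y i ω)^2) * ∑ p ∈ (Finset.univ : Finset (Fin N)).offDiag,
              Y p.1 ω * Y p.2 ω ∂μ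
        + (((N:ℝ) * ((N:ℝ)-1))⁻¹)^2 *
            ∫ ω, (∑ p ∈ (Finset.univ : Finset (Fin N)).offDiag, Y p.1 ω * Y p.2 ω)^2 ∂μ := by
    calc ∫ ω, ((N:ℝ)⁻¹ * ∑ i, (Y i ω)^2 - ((N:ℝ) * ((N:ℝ)-1))⁻¹ *
          ∑ p ∈ (Finset.univ : Finset (Fin N)).offDiag, Y p.1 ω * Y p.2 ω)^2 ∂μ
        = ∫ ω, (((N:ℝ)⁻¹ * ∑ i, (Y i ω)^2)^2
            - (2 * ((N:ℝ) * ((N:ℝ)-1))⁻¹ * (N:ℝ)⁻¹) *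
              ((∑ i, (Y i ω)^2) * ∑ p ∈ (Finset.univ : Finset (Fin N)).offDiag,
                Y p.1 ω * Y p.2 ω)
            + (((N:ℝ) * ((N:ℝ)-1))⁻¹)^2 *
              (∑ p ∈ (Finset.univ : Finset (Fin N)).offDiag, Y p.1 ω * Y p.2 ω)^2) ∂μ :=
          integral_congr_ae (Filter.Eventually.of_forall fun ω => by ring)
      _ = _ := by
          have h12 : Integrable (fun ω => ((N:ℝ)⁻¹ * ∑ i, (Y i ω)^2)^2
              - (2 * ((N:ℝ) * ((N:ℝ)-1))⁻¹ * (N:ℝ)⁻¹) *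
                ((∑ i, (Y i ω)^2) * ∑ p ∈ (Finset.univ : Finset (Fin N)).offDiag,
                  Y p.1 ω * Y p.2 ω)) μ := h1.sub h2
          rw [integral_add h12 h3, integral_sub h1 h2,
            integral_const_mul, integral_const_mul]
  rw [step1, step2, hQU, hU2]
  have hcard : ((Finset.univ : Finset (Fin N)).offDiag.card : ℝ) = (N:ℝ) * ((N:ℝ) - 1) := by
    rw [Finset.offDiag_card]
    have hcu : (Finset.univ : Finset (Fin N)).card = N := by simp
    rw [hcu]
    have h1 : N ≤ N * N := Nat.le_mul_of_pos_left N (by omega)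
    push_cast [Nat.cast_sub h1]
    ring
  rw [hcard]
  have hpos : 0 < (((N:ℝ) * ((N:ℝ)-1))⁻¹)^2 * ((N:ℝ) * ((N:ℝ) - 1) *
      (2 * ((∫ ω, (X ω)^2 ∂μ) * ∫ ω, (X ω)^2 ∂μ))) := by
    have hNN : 0 < (N:ℝ) * ((N:ℝ) - 1) := by nlinarith
    positivity
  linarith
end

section
/- Let N ∈ ℕ₊, let S ⊆ ℝᴺ be a Borel set with 0 < λ(S) < ∞ for Lebesgue measure λ, and let Y be a random vector uniformly distributed on S. Let B ⊆ S be a Borel set with μ_Y(B) > 0 (where μ_Y is the law of Y), and let X be a random vector with ℙ(X ∈ D) = μ_Y(D ∩ B)/μ_Y(B) for every Borel D. Let ⟨·,·⟩ be an inner product on ℝⁿ with induced norm |·|, let a : ℝᴺ → ℝⁿ be Borel measurable with E(|a(Y)|²) < ∞, let Δ ∈ ℝᴺ, and let A denote the event {X + Δ ∈ S}. Then for every ε > 0, ℙ( A ∩ { |a(X+Δ) − a(X)| ≥ ε } ) ≤ 4·E(|a(Y)|²) / (μ_Y(B)·ε²). -/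
open MeasureTheory

/-- The bilinear form on `ℝⁿ` given by the coefficient matrix `a`. -/
noncomputable def innerMat17 {n : ℕ} (a : Matrix (Fin n) (Fin n) ℝ) (x y : Fin n → ℝ) : ℝ :=
  ∑ i, ∑ j, a i j * x i * y j

lemma innerMat17_nonneg {n : ℕ} (a : Matrix (Fin n) (Fin n) ℝ) (h : a.PosDef) (x : Fin n → ℝ) :
    0 ≤ innerMat17 a x x := by
  have := h.posSemidef.re_dotProduct_nonneg x
  simp only [RCLike.star_def, dotProduct, Matrix.mulVec, RCLike.re_to_real] at this
  simpa [innerMat17, Finset.mul_sum, mul_assoc, mul_comm, mul_left_comm] using this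

lemma innerMat17_meas {α} [MeasurableSpace α] {n : ℕ} (a : Matrix (Fin n) (Fin n) ℝ)
    {g h : α → Fin n → ℝ} (hg : Measurable g) (hh : Measurable h) :
    Measurable fun x => innerMat17 a (g x) (h x) := by
  unfold innerMat17
  exact Finset.measurable_sum _ fun i _ => Finset.measurable_sum _ fun j _ =>
    (measurable_const.mul ((measurable_pi_apply i).comp hg)).mul ((measurable_pi_apply j).comp hh)

lemma innerMat17_sq_ineq {n : ℕ} (a : Matrix (Fin n) (Fin n) ℝ) (h : a.PosDef) (u v : Fin n → ℝ) :
    innerMat17 a (u - v) (u - v) ≤ 2 * innerMat17 a u u + 2 * innerMat17 a v v := by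
  have h1 := innerMat17_nonneg a h (u + v)
  have key : innerMat17 a (u - v) (u - v) + innerMat17 a (u + v) (u + v)
      = 2 * innerMat17 a u u + 2 * innerMat17 a v v := by
    simp only [innerMat17, Finset.mul_sum, ← Finset.sum_add_distrib]
    refine Finset.sum_congr rfl fun i _ => Finset.sum_congr rfl fun j _ => ?_
    simp only [Pi.sub_apply, Pi.add_apply]; ring
  linarith

/-- For `Y` uniform on a Borel set `S ⊆ ℝᴺ` with `0 < λ(S) < ∞`, `B ⊆ S` Borel
with `μ_Y(B) > 0`, `X` with law the normalized restriction of `μ_Y` to `B`,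
an inner product on `ℝⁿ` (given by a symmetric positive definite matrix) with
norm `|x| = √⟨x,x⟩`, `a : ℝᴺ → ℝⁿ` Borel with `E(|a(Y)|²) < ∞`, `Δ ∈ ℝᴺ` and
`A = {X + Δ ∈ S}`: for every `ε > 0`,
`ℙ(A ∩ {|a(X+Δ) − a(X)| ≥ ε}) ≤ 4·E(|a(Y)|²)/(μ_Y(B)·ε²)`. -/
theorem stmt17 {Ω : Type*} [MeasurableSpace Ω]
    (μ : Measure Ω) [IsProbabilityMeasure μ]
    (N n : ℕ) (hN : 0 < N) (hn : 0 < n)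
    (S : Set (Fin N → ℝ)) (hS : MeasurableSet S)
    (hSpos : 0 < volume S) (hSfin : volume S < ⊤)
    (Y X : Ω → Fin N → ℝ) (hY : Measurable Y) (hX : Measurable X)
    (hYunif : ∀ D : Set (Fin N → ℝ), MeasurableSet D →
      Measure.map Y μ D = volume (D ∩ S) / volume S)
    (B : Set (Fin N → ℝ)) (hBmeas : MeasurableSet B) (hBS : B ⊆ S)
    (hBpos : 0 < Measure.map Y μ B)
    (hXdist : ∀ D : Set (Fin N → ℝ), MeasurableSet D →
      Measure.map X μ D = Measure.map Y μ (D ∩ B) / Measure.map Y μ B)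
    (a : Matrix (Fin n) (Fin n) ℝ) (hsymm : a.IsSymm) (hpos : a.PosDef)
    (aF : (Fin N → ℝ) → Fin n → ℝ) (haF : Measurable aF)
    (haInt : Integrable (fun ω => innerMat17 a (aF (Y ω)) (aF (Y ω))) μ)
    (Δ : Fin N → ℝ) :
    ∀ ε : ℝ, 0 < ε →
      (μ ({ω | X ω + Δ ∈ S} ∩
          {ω | ε ≤ Real.sqrt
            (innerMat17 a (aF (X ω + Δ) - aF (X ω)) (aF (X ω + Δ) - aF (X ω)))})).toReal ≤
        4 * (∫ ω, innerMat17 a (aF (Y ω)) (aF (Y ω)) ∂μ) /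
          ((Measure.map Y μ B).toReal * ε ^ 2) := by
  intro ε hε
  set ν := Measure.map Y μ with hνdef
  have hνprob : IsProbabilityMeasure ν := Measure.isProbabilityMeasure_map hY.aemeasurable
  set q : (Fin N → ℝ) → ℝ := fun x => innerMat17 a (aF x) (aF x) with hqdef
  have hqmeas : Measurable q := innerMat17_meas a haF haF
  have hqnn : ∀ x, 0 ≤ q x := fun x => innerMat17_nonneg a hpos _
  set Q : (Fin N → ℝ) → ENNReal := fun x => ENNReal.ofReal (q x) with hQdef
  have hQmeas : Measurable Q := hqmeas.ennreal_ofReal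
  have hνB_ne_top : ν B ≠ ⊤ := (measure_lt_top ν B).ne
  have hνB_ne : ν B ≠ 0 := hBpos.ne'
  -- measure identifications
  have hm : Measure.map X μ = (ν B)⁻¹ • ν.restrict B := by
    ext s hs
    rw [hXdist s hs, Measure.smul_apply, smul_eq_mul, Measure.restrict_apply hs,
      ENNReal.div_eq_inv_mul]
  have hν : ν = (volume S)⁻¹ • volume.restrict S := by
    ext s hs
    rw [hYunif s hs, Measure.smul_apply, smul_eq_mul, Measure.restrict_apply hs,
      ENNReal.div_eq_inv_mul]
  set I : ℝ := ∫ ω, innerMat17 a (aF (Y ω)) (aF (Y ω)) ∂μ with hIdef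
  have hInn : 0 ≤ I := integral_nonneg fun ω => hqnn _
  set L : ENNReal := ∫⁻ x, Q x ∂ν with hLdef
  have hLI : L = ENNReal.ofReal I := by
    rw [hLdef, hνdef, lintegral_map hQmeas hY, hIdef,
      ofReal_integral_eq_lintegral_ofReal haInt (Filter.Eventually.of_forall fun ω => hqnn _)]
  have hLS : L = (volume S)⁻¹ * ∫⁻ x in S, Q x ∂volume := by
    rw [hLdef]; conv_lhs => rw [hν]
    rw [lintegral_smul_measure, smul_eq_mul]
  have hLne_top : L ≠ ⊤ := by rw [hLI]; exact ENNReal.ofReal_ne_top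
  -- the functions and sets
  have hXΔ : Measurable fun ω => X ω + Δ := hX.add measurable_const
  set f : Ω → ℝ := fun ω =>
    innerMat17 a (aF (X ω + Δ) - aF (X ω)) (aF (X ω + Δ) - aF (X ω)) with hfdef
  have hfmeas : Measurable f :=
    innerMat17_meas a ((haF.comp hXΔ).sub (haF.comp hX)) ((haF.comp hXΔ).sub (haF.comp hX))
  set A : Set Ω := {ω | X ω + Δ ∈ S} with hAdef
  set E : Set Ω := A ∩ {ω | ε ≤ Real.sqrt (f ω)} with hEdef
  have hAmeas : MeasurableSet A := hXΔ hS
  have hEmeas : MeasurableSet E :=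
    hAmeas.inter (measurableSet_le measurable_const (Real.continuous_sqrt.measurable.comp hfmeas))
  set S' : Set (Fin N → ℝ) := (fun x => x + Δ) ⁻¹' S with hS'def
  have hS'meas : MeasurableSet S' := (measurable_id.add measurable_const) hS
  set g : (Fin N → ℝ) → ENNReal := S'.indicator (fun x => Q (x + Δ)) with hgdef
  have hgmeas : Measurable g :=
    (hQmeas.comp (measurable_id.add measurable_const)).indicator hS'meas
  -- Chebyshev
  have step1 : ENNReal.ofReal (ε ^ 2) * μ E ≤ ∫⁻ ω in E, ENNReal.ofReal (f ω) ∂μ := by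
    rw [← setLIntegral_const E (ENNReal.ofReal (ε ^ 2))]
    refine setLIntegral_mono hfmeas.ennreal_ofReal fun ω hω => ENNReal.ofReal_le_ofReal ?_
    have h2 : ε ≤ Real.sqrt (f ω) := hω.2
    have hfnn : 0 ≤ f ω := innerMat17_nonneg a hpos _
    calc ε ^ 2 ≤ Real.sqrt (f ω) ^ 2 := pow_le_pow_left₀ hε.le h2 2
    _ = f ω := Real.sq_sqrt hfnn
  have hpt : ∀ ω, ENNReal.ofReal (f ω) ≤ 2 * Q (X ω + Δ) + 2 * Q (X ω) := by
    intro ω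
    have h1 := innerMat17_sq_ineq a hpos (aF (X ω + Δ)) (aF (X ω))
    calc ENNReal.ofReal (f ω) ≤ ENNReal.ofReal (2 * q (X ω + Δ) + 2 * q (X ω)) :=
          ENNReal.ofReal_le_ofReal h1
    _ = 2 * Q (X ω + Δ) + 2 * Q (X ω) := by
        rw [ENNReal.ofReal_add (mul_nonneg (by norm_num) (hqnn _)) (mul_nonneg (by norm_num) (hqnn _)),
          ENNReal.ofReal_mul (by norm_num), ENNReal.ofReal_mul (by norm_num)]
        norm_num
        rfl
  have step3 : ∫⁻ ω in E, ENNReal.ofReal (f ω) ∂μ ≤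
      2 * (∫⁻ ω in A, Q (X ω + Δ) ∂μ) + 2 * ∫⁻ ω, Q (X ω) ∂μ := by
    calc ∫⁻ ω in E, ENNReal.ofReal (f ω) ∂μ
        ≤ ∫⁻ ω in E, (2 * Q (X ω + Δ) + 2 * Q (X ω)) ∂μ :=
          setLIntegral_mono (((hQmeas.comp hXΔ).const_mul 2).add
            ((hQmeas.comp hX).const_mul 2)) fun ω _ => hpt ω
    _ = (∫⁻ ω in E, 2 * Q (X ω + Δ) ∂μ) + ∫⁻ ω in E, 2 * Q (X ω) ∂μ :=
          lintegral_add_left ((hQmeas.comp hXΔ).const_mul 2) _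
    _ ≤ (∫⁻ ω in A, 2 * Q (X ω + Δ) ∂μ) + ∫⁻ ω, 2 * Q (X ω) ∂μ :=
          add_le_add (lintegral_mono_set Set.inter_subset_left)
            (setLIntegral_le_lintegral _ _)
    _ = 2 * (∫⁻ ω in A, Q (X ω + Δ) ∂μ) + 2 * ∫⁻ ω, Q (X ω) ∂μ := by
          rw [lintegral_const_mul' 2 _ (by norm_num), lintegral_const_mul' 2 _ (by norm_num)]
  -- bound T2
  have hT2 : ∫⁻ ω, Q (X ω) ∂μ ≤ (ν B)⁻¹ * L := by
    rw [← lintegral_map hQmeas hX, hm, lintegral_smul_measure, smul_eq_mul]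
    exact mul_le_mul_right (setLIntegral_le_lintegral _ _) _
  -- bound T1
  have hT1 : ∫⁻ ω in A, Q (X ω + Δ) ∂μ ≤ (ν B)⁻¹ * L := by
    have e1 : ∫⁻ ω in A, Q (X ω + Δ) ∂μ = ∫⁻ ω, g (X ω) ∂μ := by
      have hApre : A = (fun ω => X ω + Δ) ⁻¹' S := rfl
      rw [hApre, ← lintegral_indicator (hXΔ hS) (fun ω => Q (X ω + Δ))]
      refine lintegral_congr fun ω => ?_
      by_cases h : X ω + Δ ∈ S
      · simp [hgdef, hAdef, hS'def, Set.indicator_apply, h]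
      · simp [hgdef, hAdef, hS'def, Set.indicator_apply, h]
    have e2 : ∫⁻ ω, g (X ω) ∂μ = (ν B)⁻¹ * ∫⁻ x in B, g x ∂ν := by
      rw [← lintegral_map hgmeas hX, hm, lintegral_smul_measure, smul_eq_mul]
    have e3 : ∫⁻ x, g x ∂ν = (volume S)⁻¹ * ∫⁻ x in S, g x ∂volume := by
      conv_lhs => rw [hν]
      rw [lintegral_smul_measure, smul_eq_mul]
    have e4 : ∫⁻ x, g x ∂volume = ∫⁻ x in S, Q x ∂volume := by
      have : ∀ x, g x = S.indicator Q (x + Δ) := by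
        intro x
        by_cases h : x + Δ ∈ S
        · simp [hgdef, hS'def, Set.indicator_apply, h]
        · simp [hgdef, hS'def, Set.indicator_apply, h]
      calc ∫⁻ x, g x ∂volume = ∫⁻ x, S.indicator Q (x + Δ) ∂volume :=
            lintegral_congr fun x => this x
      _ = ∫⁻ x, S.indicator Q x ∂volume := lintegral_add_right_eq_self (S.indicator Q) Δ
      _ = ∫⁻ x in S, Q x ∂volume := lintegral_indicator hS Q
    calc ∫⁻ ω in A, Q (X ω + Δ) ∂μ = (ν B)⁻¹ * ∫⁻ x in B, g x ∂ν := by rw [e1, e2]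
    _ ≤ (ν B)⁻¹ * ∫⁻ x, g x ∂ν := mul_le_mul_right (setLIntegral_le_lintegral _ _) _
    _ ≤ (ν B)⁻¹ * ((volume S)⁻¹ * ∫⁻ x in S, g x ∂volume) := by rw [e3]
    _ ≤ (ν B)⁻¹ * ((volume S)⁻¹ * ∫⁻ x, g x ∂volume) :=
          mul_le_mul_right (mul_le_mul_right (setLIntegral_le_lintegral _ _) _) _
    _ = (ν B)⁻¹ * L := by rw [e4, ← hLS]
  -- combine
  have main : ENNReal.ofReal (ε ^ 2) * μ E ≤ 4 * ((ν B)⁻¹ * L) := by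
    calc ENNReal.ofReal (ε ^ 2) * μ E ≤ ∫⁻ ω in E, ENNReal.ofReal (f ω) ∂μ := step1
    _ ≤ 2 * (∫⁻ ω in A, Q (X ω + Δ) ∂μ) + 2 * ∫⁻ ω, Q (X ω) ∂μ := step3
    _ ≤ 2 * ((ν B)⁻¹ * L) + 2 * ((ν B)⁻¹ * L) :=
          add_le_add (mul_le_mul_right hT1 2) (mul_le_mul_right hT2 2)
    _ = 4 * ((ν B)⁻¹ * L) := by ring
  -- conclude
  have hε2ne : ENNReal.ofReal (ε ^ 2) ≠ 0 :=
    ne_of_gt (ENNReal.ofReal_pos.mpr (by positivity))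
  have hμE : μ E ≤ 4 * ((ν B)⁻¹ * L) / ENNReal.ofReal (ε ^ 2) :=
    (ENNReal.le_div_iff_mul_le (Or.inl hε2ne) (Or.inl ENNReal.ofReal_ne_top)).mpr (by rwa [mul_comm] at main)
  have hRHSfin : 4 * ((ν B)⁻¹ * L) / ENNReal.ofReal (ε ^ 2) ≠ ⊤ := by
    refine (ENNReal.div_lt_top ?_ hε2ne).ne
    exact ENNReal.mul_ne_top (by norm_num)
      (ENNReal.mul_ne_top (ENNReal.inv_ne_top.mpr hνB_ne) hLne_top)
  have hfinal := ENNReal.toReal_mono hRHSfin hμE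
  refine le_trans hfinal (le_of_eq ?_)
  rw [ENNReal.toReal_div, ENNReal.toReal_mul, ENNReal.toReal_mul, ENNReal.toReal_inv,
    hLI, ENNReal.toReal_ofReal hInn, ENNReal.toReal_ofReal (by positivity : (0:ℝ) ≤ ε ^ 2),
    ENNReal.toReal_ofNat]
  have hc : 0 < (ν B).toReal := ENNReal.toReal_pos hνB_ne hνB_ne_top
  field_simp
end
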